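/- arXiv:2206.04020 — 9 statements merged into one kernel-verified Lean document; each statement's English description precedes it below -/
import Mathlib

section
/- Let f : ℝⁿ → ℝ be Lipschitz continuous around a point x̄ and Dini–Hadamard regular at x̄. Then for every ε > 0 the ε-Fréchet subdifferential of f at x̄ equals the Minkowski sum of the Fréchet subdifferential of f at x̄ and the closed ball of radius ε: ∂̂_ε f(x̄) = ∂̂ f(x̄) + ε𝔹. -/
open Filter Topology Metric Set Pointwise

abbrev En (n : ℕ) := EuclideanSpace ℝ (Fin n)

/-- Subderivative `d f(x)(w) := liminf_{t↓0, w'→w} (f(x+tw') − f(x))/t`. -/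
noncomputable def subderiv {V : Type*} [NormedAddCommGroup V] [NormedSpace ℝ V]
    (f : V → ℝ) (x w : V) : EReal :=
  Filter.liminf (fun p : ℝ × V => (((f (x + p.1 • p.2) - f x) / p.1 : ℝ) : EReal))
    ((𝓝[>] (0:ℝ)) ×ˢ 𝓝 w)

/-- Fréchet subdifferential `∂̂ f(x̄) := {v : ⟨v,w⟩ ≤ d f(x̄)(w) ∀ w}`. -/
noncomputable def frechetSubdiff {n : ℕ} (f : En n → ℝ) (x : En n) : Set (En n) :=
  {v | ∀ w, (((inner ℝ v w : ℝ)) : EReal) ≤ subderiv f x w}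

/-- ε-Fréchet subdifferential `∂̂_ε f(x̄) := {v : ⟨v,w⟩ − ε‖w‖ ≤ d f(x̄)(w) ∀ w}`. -/
noncomputable def epsSubdiff {n : ℕ} (f : En n → ℝ) (x : En n) (ε : ℝ) : Set (En n) :=
  {v | ∀ w, (((inner ℝ v w : ℝ) - ε * ‖w‖ : ℝ) : EReal) ≤ subderiv f x w}

lemma ev_bound {n : ℕ} (f : En n → ℝ) (x : En n) {δ : ℝ} (hδ : 0 < δ) {K : NNReal}
    (hK : LipschitzOnWith K f (Metric.ball x δ)) (w : En n) :
    ∀ᶠ p : ℝ × En n in (𝓝[>] (0:ℝ)) ×ˢ 𝓝 w,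
      |(f (x + p.1 • p.2) - f x) / p.1| ≤ (K : ℝ) * (‖w‖ + 1) := by
  have hM : (0:ℝ) < ‖w‖ + 1 := by positivity
  have h1 : ∀ᶠ t in 𝓝[>] (0:ℝ), 0 < t ∧ t < δ / (‖w‖ + 1) := by
    have ha : ∀ᶠ t in 𝓝[>] (0:ℝ), 0 < t := self_mem_nhdsWithin
    have hb : ∀ᶠ t in 𝓝[>] (0:ℝ), t < δ / (‖w‖ + 1) :=
      (eventually_lt_nhds (by positivity)).filter_mono nhdsWithin_le_nhds
    exact ha.and hb
  have h2 : ∀ᶠ w' in 𝓝 w, ‖w'‖ < ‖w‖ + 1 :=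
    (continuous_norm.tendsto w).eventually (eventually_lt_nhds (by linarith))
  filter_upwards [h1.prod_mk h2] with p hp
  obtain ⟨⟨ht0, htδ⟩, hw'⟩ := hp
  have hnorm : ‖p.1 • p.2‖ = p.1 * ‖p.2‖ := by
    rw [norm_smul, Real.norm_eq_abs, abs_of_pos ht0]
  have hmem : x + p.1 • p.2 ∈ Metric.ball x δ := by
    rw [Metric.mem_ball, dist_self_add_left, hnorm]
    calc p.1 * ‖p.2‖ ≤ p.1 * (‖w‖ + 1) := by nlinarith
    _ < (δ / (‖w‖ + 1)) * (‖w‖ + 1) := by nlinarith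
    _ = δ := by field_simp
  have hd := hK.dist_le_mul _ hmem _ (Metric.mem_ball_self hδ)
  rw [Real.dist_eq, dist_self_add_left, hnorm] at hd
  rw [abs_div, abs_of_pos ht0, div_le_iff₀ ht0]
  calc |f (x + p.1 • p.2) - f x| ≤ K * (p.1 * ‖p.2‖) := hd
  _ ≤ (K : ℝ) * (‖w‖ + 1) * p.1 := by
    nlinarith [mul_le_mul_of_nonneg_left hw'.le (mul_nonneg (NNReal.coe_nonneg K) ht0.le)]

lemma subderiv_lb {n : ℕ} (f : En n → ℝ) (x : En n) {δ : ℝ} (hδ : 0 < δ) {K : NNReal}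
    (hK : LipschitzOnWith K f (Metric.ball x δ)) (w : En n) :
    ((-((K : ℝ) * (‖w‖ + 1)) : ℝ) : EReal) ≤ subderiv f x w := by
  apply Filter.le_liminf_of_le (by isBoundedDefault)
  filter_upwards [ev_bound f x hδ hK w] with p hp
  exact EReal.coe_le_coe_iff.mpr (by cases abs_le.mp hp; linarith)

lemma subderiv_ub {n : ℕ} (f : En n → ℝ) (x : En n) {δ : ℝ} (hδ : 0 < δ) {K : NNReal}
    (hK : LipschitzOnWith K f (Metric.ball x δ)) (w : En n) :
    subderiv f x w ≤ (((K : ℝ) * (‖w‖ + 1) : ℝ) : EReal) := by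
  have hne : ((𝓝[>] (0:ℝ)) ×ˢ 𝓝 w).NeBot := by infer_instance
  refine Filter.liminf_le_of_frequently_le (Filter.Eventually.frequently ?_) (by isBoundedDefault)
  filter_upwards [ev_bound f x hδ hK w] with p hp
  exact EReal.coe_le_coe_iff.mpr (by cases abs_le.mp hp; linarith)

/-- If `f` is Lipschitz continuous around `x̄` and Dini–Hadamard regular at `x̄`, then
`∂̂_ε f(x̄) = ∂̂ f(x̄) + ε𝔹`. -/
theorem stmt0 {n : ℕ} (f : En n → ℝ) (x : En n)
    (hLip : ∃ δ > (0:ℝ), ∃ K : NNReal, LipschitzOnWith K f (Metric.ball x δ))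
    (hreg : ∀ w, subderiv f x w =
      sSup ((fun v => (((inner ℝ v w : ℝ)) : EReal)) '' frechetSubdiff f x))
    (ε : ℝ) (hε : 0 < ε) :
    epsSubdiff f x ε = frechetSubdiff f x + Metric.closedBall (0 : En n) ε := by
  obtain ⟨δ, hδ, K, hK⟩ := hLip
  set A := frechetSubdiff f x with hA
  -- subderiv is finite
  have hnb : ∀ w, subderiv f x w ≠ ⊥ := by
    intro w h
    have hl := subderiv_lb f x hδ hK w
    rw [h] at hl
    exact (EReal.coe_ne_bot _) (le_bot_iff.mp hl)
  have hnt : ∀ w, subderiv f x w ≠ ⊤ := by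
    intro w h
    have hl := subderiv_ub f x hδ hK w
    rw [h] at hl
    exact (EReal.coe_ne_top _) (top_le_iff.mp hl)
  set D : En n → ℝ := fun w => (subderiv f x w).toReal with hD
  have hDw : ∀ w, subderiv f x w = ((D w : ℝ) : EReal) := fun w =>
    (EReal.coe_toReal (hnt w) (hnb w)).symm
  have hDub : ∀ w, D w ≤ (K : ℝ) * (‖w‖ + 1) := fun w =>
    EReal.coe_le_coe_iff.mp (by rw [← hDw w]; exact subderiv_ub f x hδ hK w)
  have hA_mem : ∀ v, v ∈ A ↔ ∀ w, (inner ℝ v w : ℝ) ≤ D w := by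
    intro v
    constructor <;> intro h w <;> have := h w
    · exact EReal.coe_le_coe_iff.mp (by rw [← hDw w]; exact this)
    · rw [hDw w]; exact EReal.coe_le_coe_iff.mpr this
  have hAconv : Convex ℝ A := by
    intro v1 h1 v2 h2 a b ha hb hab
    rw [hA_mem] at h1 h2 ⊢
    intro w
    have e1 := h1 w; have e2 := h2 w
    rw [inner_add_left, real_inner_smul_left, real_inner_smul_left]
    have e3 : a * D w + b * D w = D w := by rw [← add_mul, hab, one_mul]
    nlinarith [mul_le_mul_of_nonneg_left e1 ha, mul_le_mul_of_nonneg_left e2 hb]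
  have hAclosed : IsClosed A := by
    have : A = ⋂ w, {v : En n | (inner ℝ v w : ℝ) ≤ D w} := by
      ext v; simp only [Set.mem_iInter, Set.mem_setOf_eq, hA_mem]
    rw [this]
    exact isClosed_iInter fun w =>
      isClosed_le (Continuous.inner continuous_id continuous_const) continuous_const
  have hAsub : A ⊆ Metric.closedBall (0 : En n) (2 * K + 1) := by
    intro u hu
    rw [mem_closedBall_zero_iff]
    have h1 : (inner ℝ u u : ℝ) ≤ D u := (hA_mem u).mp hu u
    have h2 := hDub u
    rw [real_inner_self_eq_norm_sq] at h1
    nlinarith [norm_nonneg u, NNReal.coe_nonneg K]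
  have hAcomp : IsCompact A :=
    IsCompact.of_isClosed_subset (isCompact_closedBall _ _) hAclosed hAsub
  have hAne : A.Nonempty := by
    by_contra h
    rw [Set.not_nonempty_iff_eq_empty] at h
    have := hreg 0
    rw [h, Set.image_empty, sSup_empty] at this
    exact hnb 0 this
  ext v
  constructor
  · intro hv
    by_contra hvS
    set S := A + Metric.closedBall (0 : En n) ε with hS
    have hSconv : Convex ℝ S := hAconv.add (convex_closedBall 0 ε)
    have hSclosed : IsClosed S := (hAcomp.add (isCompact_closedBall 0 ε)).isClosed
    obtain ⟨g, u, hgu, hlt⟩ := geometric_hahn_banach_closed_point hSconv hSclosed hvS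
    set w := (InnerProductSpace.toDual ℝ (En n)).symm g with hw
    have hgw : ∀ y, g y = (inner ℝ w y : ℝ) := fun y =>
      (InnerProductSpace.toDual_symm_apply).symm
    have hw0 : w ≠ 0 := by
      intro h0
      obtain ⟨u0, hu0⟩ := hAne
      have hmem : u0 + 0 ∈ S := Set.add_mem_add hu0 (Metric.mem_closedBall_self hε.le)
      have h1 := hgu _ hmem
      rw [hgw, h0] at h1 hlt
      simp only [inner_zero_left] at h1 hlt
      linarith
    have hwn : (0:ℝ) < ‖w‖ := norm_pos_iff.mpr hw0
    have hb : (ε / ‖w‖) • w ∈ Metric.closedBall (0 : En n) ε := by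
      rw [mem_closedBall_zero_iff, norm_smul, Real.norm_eq_abs,
        abs_of_pos (by positivity), div_mul_cancel₀ _ hwn.ne']
    have key : ∀ u0 ∈ A, (inner ℝ u0 w : ℝ) ≤ u - ε * ‖w‖ := by
      intro u0 hu0
      have h1 := hgu _ (Set.add_mem_add hu0 hb)
      rw [hgw, inner_add_right, real_inner_smul_right, real_inner_self_eq_norm_sq] at h1
      have : ε / ‖w‖ * ‖w‖ ^ 2 = ε * ‖w‖ := by field_simp
      rw [this] at h1
      rw [real_inner_comm]
      linarith
    have hsup : subderiv f x w ≤ ((u - ε * ‖w‖ : ℝ) : EReal) := by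
      rw [hreg w]
      apply sSup_le
      rintro _ ⟨u0, hu0, rfl⟩
      exact EReal.coe_le_coe_iff.mpr (key u0 hu0)
    have h1 : ((inner ℝ v w - ε * ‖w‖ : ℝ) : EReal) ≤ ((u - ε * ‖w‖ : ℝ) : EReal) :=
      le_trans (hv w) hsup
    have h2 := EReal.coe_le_coe_iff.mp h1
    have h3 : u < (inner ℝ v w : ℝ) := by rw [← real_inner_comm, ← hgw]; exact hlt
    linarith
  · intro hvmem
    rw [Set.mem_add] at hvmem
    obtain ⟨u0, hu0, b, hb, rfl⟩ := hvmem
    intro w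
    have h1 := hu0 w
    have hbw : (inner ℝ b w : ℝ) ≤ ε * ‖w‖ :=
      le_trans (real_inner_le_norm b w)
        (mul_le_mul_of_nonneg_right (mem_closedBall_zero_iff.mp hb) (norm_nonneg w))
    refine le_trans ?_ h1
    apply EReal.coe_le_coe_iff.mpr
    rw [inner_add_left]
    linarith
end

section
/- Let X ⊆ ℝᵐ be closed, F : ℝⁿ → ℝᵐ be semi-differentiable at x̄, and let x̄ belong to Ω := {x ∈ ℝⁿ : F(x) ∈ X}. If the metric subregularity constraint qualification holds at x̄ with constant κ > 0 (i.e., dist(x; Ω) ≤ κ·dist(F(x); X) for all x in some neighborhood of x̄), then the same estimate holds globally at the tangent level: for all w ∈ ℝⁿ, dist(w; T_Ω(x̄)) ≤ κ·dist(dF(x̄)(w); T_X(F(x̄))). -/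
open Filter Topology Metric Set

/-- Semi-differentiability with semi-derivative `g`:
`dF(x)(w) := lim_{t↓0, w'→w} (F(x+tw') − F(x))/t` exists for every `w`. -/
def HasSemiDerivAt {V W : Type*} [NormedAddCommGroup V] [NormedSpace ℝ V]
    [NormedAddCommGroup W] [NormedSpace ℝ W] (F : V → W) (x : V) (g : V → W) : Prop :=
  ∀ w, Filter.Tendsto (fun p : ℝ × V => (p.1)⁻¹ • (F (x + p.1 • p.2) - F x))
    ((𝓝[>] (0:ℝ)) ×ˢ 𝓝 w) (𝓝 (g w))

/-- Bouligand tangent cone `T_X(x) := {w : ∃ t_k ↓ 0, w_k → w, x + t_k w_k ∈ X}`. -/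
def tanCone {V : Type*} [NormedAddCommGroup V] [NormedSpace ℝ V] (X : Set V) (x : V) : Set V :=
  {w | ∃ t : ℕ → ℝ, ∃ v : ℕ → V, (∀ k, 0 < t k) ∧ Filter.Tendsto t Filter.atTop (𝓝 0) ∧
    Filter.Tendsto v Filter.atTop (𝓝 w) ∧ ∀ k, x + t k • v k ∈ X}

/-- `0` belongs to the tangent cone at any point of the set. -/
lemma zero_mem_tanCone {V : Type*} [NormedAddCommGroup V] [NormedSpace ℝ V]
    {X : Set V} {x : V} (hx : x ∈ X) : (0 : V) ∈ tanCone X x := by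
  refine ⟨fun k => ((k : ℝ) + 1)⁻¹, fun _ => 0, fun k => by positivity, ?_, tendsto_const_nhds,
    fun k => by simpa using hx⟩
  simpa [one_div] using tendsto_one_div_add_atTop_nhds_zero_nat (𝕜 := ℝ)

/-- Preservation of metric subregularity by tangent cones: if the metric subregularity
constraint qualification holds at `x̄ ∈ Ω := {x : F(x) ∈ X}` with constant `κ`, then
`dist(w; T_Ω(x̄)) ≤ κ · dist(dF(x̄)(w); T_X(F(x̄)))` for all `w`. -/
theorem stmt1 {n m : ℕ} (F : En n → En m) (X : Set (En m)) (hX : IsClosed X)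
    (x : En n) (hx : F x ∈ X)
    (dF : En n → En m) (hF : HasSemiDerivAt F x dF)
    (κ : ℝ) (hκ : 0 < κ)
    (hMSQC : ∀ᶠ x' in 𝓝 x, infDist x' {z | F z ∈ X} ≤ κ * infDist (F x') X) :
    ∀ w, infDist w (tanCone {z | F z ∈ X} x) ≤ κ * infDist (dF w) (tanCone X (F x)) := by
  intro w
  set Ω : Set (En n) := {z | F z ∈ X} with hΩdef
  have hΩx : x ∈ Ω := hx
  set D : ℝ := infDist (dF w) (tanCone X (F x)) with hD
  -- it suffices to prove the bound up to an arbitrary ε > 0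
  refine le_of_forall_pos_le_add fun ε hε => ?_
  have hκ1 : (0:ℝ) < κ + 1 := by linarith
  set ε' : ℝ := ε / (κ + 1) with hε'def
  have hε' : 0 < ε' := div_pos hε hκ1
  -- pick u in the tangent cone to X almost attaining the infimum
  have hne : (tanCone X (F x)).Nonempty := ⟨0, zero_mem_tanCone hx⟩
  obtain ⟨u, hu, hdu⟩ : ∃ u ∈ tanCone X (F x), dist (dF w) u < D + ε' :=
    (infDist_lt_iff hne).1 (by linarith)
  obtain ⟨t, s, htpos, ht0, hs, hmemX⟩ := hu
  have htne : ∀ k, t k ≠ 0 := fun k => (htpos k).ne'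
  -- difference quotients along t k with direction w
  set g : ℕ → En m := fun k => (t k)⁻¹ • (F (x + t k • w) - F x) with hgdef
  have hg : Tendsto g atTop (𝓝 (dF w)) := by
    have h1 : Tendsto (fun k => ((t k, w) : ℝ × En n)) atTop ((𝓝[>] (0:ℝ)) ×ˢ 𝓝 w) := by
      refine Tendsto.prodMk ?_ tendsto_const_nhds
      exact tendsto_nhdsWithin_of_tendsto_nhds_of_eventually_within _ ht0
        (Eventually.of_forall htpos)
    exact (hF w).comp h1
  have hgs : Tendsto (fun k => ‖g k - s k‖) atTop (𝓝 ‖dF w - u‖) := (hg.sub hs).norm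
  have hev1 : ∀ᶠ k in atTop, ‖g k - s k‖ < D + ε' :=
    hgs.eventually_lt_const (by rwa [← dist_eq_norm])
  -- the feasibility gap at x + t k • w is at most t k * (D + ε')
  have hev2 : ∀ᶠ k in atTop, infDist (F (x + t k • w)) X ≤ t k * (D + ε') := by
    filter_upwards [hev1] with k hk
    have hmem := hmemX k
    calc infDist (F (x + t k • w)) X ≤ dist (F (x + t k • w)) (F x + t k • s k) :=
          infDist_le_dist_of_mem hmem
      _ = ‖t k • (g k - s k)‖ := by
          rw [dist_eq_norm, smul_sub, hgdef, smul_inv_smul₀ (htne k)]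
          congr 1
          abel
      _ = t k * ‖g k - s k‖ := by
          rw [norm_smul, Real.norm_eq_abs, abs_of_pos (htpos k)]
      _ ≤ t k * (D + ε') := by
          exact mul_le_mul_of_nonneg_left hk.le (htpos k).le
  -- the MSQC estimate applies at x + t k • w for large k
  have hx0 : Tendsto (fun k => x + t k • w) atTop (𝓝 x) := by
    have : Tendsto (fun k => t k • w) atTop (𝓝 ((0:ℝ) • w)) := ht0.smul_const w
    simpa using tendsto_const_nhds.add this
  have hev3 : ∀ᶠ k in atTop, infDist (x + t k • w) Ω ≤ κ * infDist (F (x + t k • w)) X :=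
    hx0.eventually hMSQC
  -- choose near-projections q k ∈ Ω
  have hq : ∀ k, ∃ q ∈ Ω, dist (x + t k • w) q < infDist (x + t k • w) Ω + t k * ε' := by
    intro k
    exact (infDist_lt_iff ⟨x, hΩx⟩).1 (lt_add_of_pos_right _ (mul_pos (htpos k) hε'))
  choose q hqΩ hqd using hq
  set v : ℕ → En n := fun k => (t k)⁻¹ • (q k - x) with hvdef
  have hvmem : ∀ k, x + t k • v k ∈ Ω := by
    intro k
    have : x + t k • v k = q k := by
      rw [hvdef]; simp [smul_inv_smul₀ (htne k)]
    rw [this]; exact hqΩ k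
  set C : ℝ := κ * (D + ε') + ε' with hCdef
  -- the directions v k eventually lie in the ball of radius C around w
  have hbound : ∀ᶠ k in atTop, v k ∈ closedBall w C := by
    filter_upwards [hev2, hev3] with k h2 h3
    have hd : dist (x + t k • w) (q k) ≤ t k * C := by
      have := hqd k
      have h4 : infDist (x + t k • w) Ω ≤ κ * (t k * (D + ε')) :=
        h3.trans (mul_le_mul_of_nonneg_left h2 hκ.le)
      have h5 : t k * C = κ * (t k * (D + ε')) + t k * ε' := by rw [hCdef]; ring
      linarith
    have hwv : w - v k = (t k)⁻¹ • ((x + t k • w) - q k) := by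
      simp only [hvdef, smul_sub, smul_add, inv_smul_smul₀ (htne k)]
      abel
    have : dist (v k) w = (t k)⁻¹ * dist (x + t k • w) (q k) := by
      rw [dist_comm, dist_eq_norm, hwv, norm_smul, Real.norm_eq_abs,
        abs_of_pos (inv_pos.2 (htpos k)), dist_eq_norm]
    rw [mem_closedBall, this]
    calc (t k)⁻¹ * dist (x + t k • w) (q k) ≤ (t k)⁻¹ * (t k * C) :=
          mul_le_mul_of_nonneg_left hd (inv_pos.2 (htpos k)).le
      _ = C := inv_mul_cancel_left₀ (htne k) C
  -- Bolzano-Weierstrass: extract a convergent subsequence of v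
  obtain ⟨a, ha, φ, hφ, hva⟩ :=
    tendsto_subseq_of_frequently_bounded isBounded_closedBall hbound.frequently
  have haC : dist a w ≤ C := by
    rw [Metric.isClosed_closedBall.closure_eq] at ha
    simpa [mem_closedBall] using ha
  -- a belongs to the tangent cone to Ω at x
  have haT : a ∈ tanCone Ω x := by
    refine ⟨t ∘ φ, v ∘ φ, fun k => htpos _, ?_, hva, fun k => hvmem _⟩
    exact ht0.comp hφ.tendsto_atTop
  calc infDist w (tanCone Ω x) ≤ dist w a := infDist_le_dist_of_mem haT
    _ ≤ C := by rwa [dist_comm]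
    _ = κ * D + ε := by
        rw [hCdef, hε'def]; field_simp; ring
end

section
/- Let X ⊆ ℝⁿ be nonempty and closed and let q(x) := ½·dist²(x; X) with the Euclidean distance. Then q is semi-differentiable at every x ∈ ℝⁿ, and its semi-derivative is given by d q(x)(w) = min { ⟨x − y, w⟩ : y ∈ proj_X(x) }, where proj_X(x) is the (nonempty compact) set of Euclidean nearest points of X to x. -/
open Filter Topology Metric Set

/-- Euclidean projection set `proj_X(x) := {y ∈ X : ‖x − y‖ = dist(x;X)}`. -/
noncomputable def projSet {V : Type*} [NormedAddCommGroup V] [NormedSpace ℝ V]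
    (X : Set V) (x : V) : Set V :=
  {y ∈ X | dist x y = Metric.infDist x X}

section aux

variable {V : Type*} [NormedAddCommGroup V] [InnerProductSpace ℝ V]

lemma upper_bound' (X : Set V) {x y : V} (hy : y ∈ projSet X x) {t : ℝ} (ht : 0 < t) (w' : V) :
    t⁻¹ * (infDist (x + t • w') X ^ 2 / 2 - infDist x X ^ 2 / 2) ≤
      (inner ℝ (x - y) w' : ℝ) + t * ‖w'‖ ^ 2 / 2 := by
  obtain ⟨hyX, hyd⟩ := hy
  have h0 : infDist x X = ‖x - y‖ := by rw [← hyd, dist_eq_norm]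
  have h1 : infDist (x + t • w') X ≤ ‖(x - y) + t • w'‖ := by
    have h := infDist_le_dist_of_mem (x := x + t • w') hyX
    rw [dist_eq_norm] at h
    convert h using 2
    case e'_2 => rfl
    case e'_3 => abel
  have h2 : infDist (x + t • w') X ^ 2 ≤ ‖(x - y) + t • w'‖ ^ 2 :=
    pow_le_pow_left₀ infDist_nonneg h1 2
  have h3 : ‖(x - y) + t • w'‖ ^ 2 =
      ‖x - y‖ ^ 2 + 2 * (t * (inner ℝ (x - y) w' : ℝ)) + t ^ 2 * ‖w'‖ ^ 2 := by
    rw [@norm_add_sq_real, real_inner_smul_right, norm_smul]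
    simp [mul_pow, sq_abs]
  rw [inv_mul_le_iff₀ ht, h0]
  nlinarith [h2, h3]

lemma lower_bound' (X : Set V) {x y' : V} {t : ℝ} (ht : 0 < t) (w' : V)
    (hy' : y' ∈ projSet X (x + t • w')) :
    (inner ℝ (x + t • w' - y') w' : ℝ) - t * ‖w'‖ ^ 2 / 2 ≤
      t⁻¹ * (infDist (x + t • w') X ^ 2 / 2 - infDist x X ^ 2 / 2) := by
  obtain ⟨hyX, hyd⟩ := hy'
  have h0 : infDist (x + t • w') X = ‖x + t • w' - y'‖ := by rw [← hyd, dist_eq_norm]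
  have h1 : infDist x X ≤ ‖(x + t • w' - y') - t • w'‖ := by
    have h := infDist_le_dist_of_mem (x := x) hyX
    rw [dist_eq_norm] at h
    convert h using 2
    case e'_2 => rfl
    case e'_3 => abel
  have h2 : infDist x X ^ 2 ≤ ‖(x + t • w' - y') - t • w'‖ ^ 2 :=
    pow_le_pow_left₀ infDist_nonneg h1 2
  have h3 : ‖(x + t • w' - y') - t • w'‖ ^ 2 =
      ‖x + t • w' - y'‖ ^ 2 - 2 * (t * (inner ℝ (x + t • w' - y') w' : ℝ)) + t ^ 2 * ‖w'‖ ^ 2 := by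
    rw [@norm_sub_sq_real, real_inner_smul_right, norm_smul]
    simp [mul_pow, sq_abs]
  rw [le_inv_mul_iff₀ ht, h0]
  nlinarith [h2, h3]

end aux

set_option maxHeartbeats 1000000 in
/-- For a nonempty closed `X ⊆ ℝⁿ`, the function `q(x) = ½ dist²(x;X)` is semi-differentiable
at every `x`, with semi-derivative `w ↦ min{⟨x − y, w⟩ : y ∈ proj_X(x)}`. -/
theorem stmt2 {n : ℕ} (X : Set (En n)) (hX : IsClosed X) (hne : X.Nonempty) (x : En n) :
    HasSemiDerivAt (fun z => infDist z X ^ 2 / 2) x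
      (fun w => sInf ((fun y => (inner ℝ (x - y) w : ℝ)) '' projSet X x)) := by
  intro w
  set m := infDist x X with hm
  -- projection set is compact and nonempty
  have hPsub : projSet X x ⊆ closedBall x m := by
    intro y hy
    simp only [mem_closedBall, dist_comm]
    exact le_of_eq hy.2
  have hPclosed : IsClosed (projSet X x) := by
    have : projSet X x = X ∩ {y | dist x y = m} := rfl
    rw [this]
    exact hX.inter (isClosed_eq (continuous_const.dist continuous_id) continuous_const)
  have hPc : IsCompact (projSet X x) :=
    (isCompact_closedBall x m).of_isClosed_subset hPclosed hPsub
  have hPne : (projSet X x).Nonempty := by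
    obtain ⟨y, hyX, hyd⟩ := hX.exists_infDist_eq_dist hne x
    exact ⟨y, hyX, hyd.symm⟩
  have hfc : Continuous fun y : En n => (inner ℝ (x - y) w : ℝ) :=
    (continuous_const.sub continuous_id).inner continuous_const
  obtain ⟨y₀, hy₀P, hsInf⟩ := hPc.exists_sInf_image_eq hPne hfc.continuousOn
  have hgoal : (fun w => sInf ((fun y => (inner ℝ (x - y) w : ℝ)) '' projSet X x)) w
      = (inner ℝ (x - y₀) w : ℝ) := hsInf
  rw [hgoal]
  -- reduce to subsequences
  apply tendsto_of_subseq_tendsto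
  intro ns hns
  rw [tendsto_prod_iff'] at hns
  obtain ⟨ht, hw⟩ := hns
  set t : ℕ → ℝ := fun k => (ns k).1 with htdef
  set w' : ℕ → En n := fun k => (ns k).2 with hwdef
  have ht0 : Tendsto t atTop (𝓝 0) := ht.mono_right nhdsWithin_le_nhds
  have htpos : ∀ᶠ k in atTop, 0 < t k := ht self_mem_nhdsWithin
  set z : ℕ → En n := fun k => x + t k • w' k with hzdef
  have hz : Tendsto z atTop (𝓝 x) := by
    have h1 : Tendsto (fun k => t k • w' k) atTop (𝓝 ((0:ℝ) • w)) := ht0.smul hw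
    rw [zero_smul] at h1
    have := (tendsto_const_nhds : Tendsto (fun _ : ℕ => x) atTop (𝓝 x)).add h1
    rwa [add_zero] at this
  -- choose nearest points
  have hproj : ∀ v : En n, ∃ y, y ∈ X ∧ infDist v X = dist v y := by
    intro v
    obtain ⟨y, hyX, hyd⟩ := hX.exists_infDist_eq_dist hne v
    exact ⟨y, hyX, hyd⟩
  choose Y hYX hYd using hproj
  set y : ℕ → En n := fun k => Y (z k) with hydef
  have hyP : ∀ k, y k ∈ projSet X (z k) := fun k => ⟨hYX (z k), (hYd (z k)).symm⟩
  have hdzy : Tendsto (fun k => dist (z k) (y k)) atTop (𝓝 m) := by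
    have h1 : Tendsto (fun k => infDist (z k) X) atTop (𝓝 m) :=
      ((continuous_infDist_pt X).tendsto x).comp hz
    refine h1.congr fun k => ?_
    exact hYd (z k)
  have hdxz : Tendsto (fun k => dist x (z k)) atTop (𝓝 0) := by
    have := (tendsto_const_nhds : Tendsto (fun _ : ℕ => x) atTop (𝓝 x)).dist hz
    simpa using this
  have hdxy : Tendsto (fun k => dist x (y k)) atTop (𝓝 m) := by
    apply hdzy.congr_dist
    apply squeeze_zero (fun k => abs_nonneg _) (fun k => ?_)
    · simpa using hdxz
    · have := abs_dist_sub_le (z k) x (y k)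
      simpa [Real.dist_eq, dist_comm] using this
  -- eventually the nearest points are in a fixed compact set
  have hev : ∀ᶠ k in atTop, dist x (y k) ≤ m + 1 := by
    filter_upwards [hdxy.eventually_lt_const (lt_add_one m)] with k hk using hk.le
  obtain ⟨N, hN⟩ := eventually_atTop.mp hev
  set s : Set (En n) := X ∩ closedBall x (m + 1) with hsdef
  have hsb : Bornology.IsBounded s := isBounded_closedBall.subset inter_subset_right
  have hsc : IsClosed s := hX.inter Metric.isClosed_closedBall
  have hvs : ∀ k, y (k + N) ∈ s := by
    intro k
    exact ⟨hYX _, by simpa [mem_closedBall, dist_comm] using hN (k + N) (Nat.le_add_left N k)⟩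
  obtain ⟨a, hacl, φ, hφmono, hφtend⟩ := tendsto_subseq_of_bounded hsb hvs
  rw [hsc.closure_eq] at hacl
  set σ : ℕ → ℕ := fun k => φ k + N with hσdef
  have hσ : Tendsto σ atTop atTop :=
    tendsto_atTop_mono (fun k => le_trans (hφmono.id_le k) (Nat.le_add_right _ _)) tendsto_id
  have hφtend' : Tendsto (fun k => y (σ k)) atTop (𝓝 a) := hφtend
  -- a is in the projection set
  have hadist : dist x a = m :=
    tendsto_nhds_unique ((tendsto_const_nhds.dist hφtend')) (hdxy.comp hσ)
  have haP : a ∈ projSet X x := ⟨hacl.1, hadist⟩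
  -- limits of bounds
  have hwσ : Tendsto (fun k => w' (σ k)) atTop (𝓝 w) := hw.comp hσ
  have htσ : Tendsto (fun k => t (σ k)) atTop (𝓝 0) := ht0.comp hσ
  have hzσ : Tendsto (fun k => z (σ k)) atTop (𝓝 x) := hz.comp hσ
  have herr : Tendsto (fun k => t (σ k) * ‖w' (σ k)‖ ^ 2 / 2) atTop (𝓝 0) := by
    have := (htσ.mul ((hwσ.norm.pow 2))).div_const 2
    simpa using this
  have hlowtend : Tendsto (fun k => (inner ℝ (z (σ k) - y (σ k)) (w' (σ k)) : ℝ)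
      - t (σ k) * ‖w' (σ k)‖ ^ 2 / 2) atTop (𝓝 ((inner ℝ (x - a) w : ℝ))) := by
    have h1 : Tendsto (fun k => (inner ℝ (z (σ k) - y (σ k)) (w' (σ k)) : ℝ)) atTop
        (𝓝 ((inner ℝ (x - a) w : ℝ))) := (hzσ.sub hφtend').inner hwσ
    have := h1.sub herr
    simpa using this
  have huptend : Tendsto (fun k => (inner ℝ (x - y₀) (w' (σ k)) : ℝ)
      + t (σ k) * ‖w' (σ k)‖ ^ 2 / 2) atTop (𝓝 ((inner ℝ (x - y₀) w : ℝ))) := by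
    have h1 : Tendsto (fun k => (inner ℝ (x - y₀) (w' (σ k)) : ℝ)) atTop
        (𝓝 ((inner ℝ (x - y₀) w : ℝ))) := (tendsto_const_nhds.inner hwσ)
    have := h1.add herr
    simpa using this
  -- eventual bounds
  have hbnd : ∀ᶠ k in atTop,
      (inner ℝ (z (σ k) - y (σ k)) (w' (σ k)) : ℝ) - t (σ k) * ‖w' (σ k)‖ ^ 2 / 2 ≤
        (t (σ k))⁻¹ • (infDist (x + t (σ k) • w' (σ k)) X ^ 2 / 2 - infDist x X ^ 2 / 2) ∧
      (t (σ k))⁻¹ • (infDist (x + t (σ k) • w' (σ k)) X ^ 2 / 2 - infDist x X ^ 2 / 2) ≤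
        (inner ℝ (x - y₀) (w' (σ k)) : ℝ) + t (σ k) * ‖w' (σ k)‖ ^ 2 / 2 := by
    filter_upwards [hσ.eventually htpos] with k hk
    constructor
    · simpa [smul_eq_mul] using lower_bound' X hk (w' (σ k)) (hyP (σ k))
    · simpa [smul_eq_mul] using upper_bound' X hy₀P hk (w' (σ k))
  -- the two limits agree
  have hle1 : (inner ℝ (x - y₀) w : ℝ) ≤ (inner ℝ (x - a) w : ℝ) := by
    have hbb : BddBelow ((fun y => (inner ℝ (x - y) w : ℝ)) '' projSet X x) :=
      (hPc.image hfc).bddBelow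
    have := csInf_le hbb (mem_image_of_mem _ haP)
    rwa [hsInf] at this
  have hle2 : (inner ℝ (x - a) w : ℝ) ≤ (inner ℝ (x - y₀) w : ℝ) := by
    refine le_of_tendsto_of_tendsto hlowtend huptend ?_
    filter_upwards [hbnd] with k hk using hk.1.trans hk.2
  have heq : (inner ℝ (x - a) w : ℝ) = (inner ℝ (x - y₀) w : ℝ) := le_antisymm hle2 hle1
  refine ⟨σ, ?_⟩
  refine tendsto_of_tendsto_of_tendsto_of_le_of_le' (heq ▸ hlowtend) huptend ?_ ?_
  · filter_upwards [hbnd] with k hk using hk.1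
  · filter_upwards [hbnd] with k hk using hk.2
end

section
/- Let X ⊆ ℝⁿ be nonempty and closed and let q(x) := ½·dist²(x; X) with the Euclidean distance. Then for all x, y ∈ ℝⁿ, q(y) ≤ q(x) + d q(x)(y − x) + ½‖y − x‖², where d q(x)(w) = min { ⟨x − z, w⟩ : z ∈ proj_X(x) } is the semi-derivative of q at x. -/
open Filter Topology Metric Set

/-- Descent estimate for `q(x) = ½ dist²(x;X)`:
`q(y) ≤ q(x) + d q(x)(y − x) + ½‖y − x‖²`, where
`d q(x)(w) = min{⟨x − z, w⟩ : z ∈ proj_X(x)}`. -/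
theorem stmt3 {n : ℕ} (X : Set (En n)) (hX : IsClosed X) (hne : X.Nonempty) (x y : En n) :
    infDist y X ^ 2 / 2 ≤ infDist x X ^ 2 / 2
      + sInf ((fun z => (inner ℝ (x - z) (y - x) : ℝ)) '' projSet X x)
      + ‖y - x‖ ^ 2 / 2 := by
  obtain ⟨z0, hz0X, hz0⟩ := hX.exists_infDist_eq_dist hne x
  have hproj : (projSet X x).Nonempty := ⟨z0, hz0X, hz0.symm⟩
  have key : ∀ c ∈ (fun z => (inner ℝ (x - z) (y - x) : ℝ)) '' projSet X x,
      infDist y X ^ 2 / 2 - infDist x X ^ 2 / 2 - ‖y - x‖ ^ 2 / 2 ≤ c := by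
    rintro c ⟨z, ⟨hzX, hz⟩, rfl⟩
    have h1 : infDist y X ≤ ‖y - z‖ := by
      simpa [dist_eq_norm] using infDist_le_dist_of_mem (x := y) hzX
    have h0 : (0:ℝ) ≤ infDist y X := infDist_nonneg
    have h2 : infDist y X ^ 2 ≤ ‖y - z‖ ^ 2 := by nlinarith
    have hx : infDist x X = ‖x - z‖ := by rw [← hz, dist_eq_norm]
    have hexp : ‖y - z‖ ^ 2 = ‖y - x‖ ^ 2 + 2 * (inner ℝ (x - z) (y - x) : ℝ) + ‖x - z‖ ^ 2 := by
      have : y - z = (y - x) + (x - z) := by abel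
      rw [this, norm_add_sq_real]
      rw [real_inner_comm]
    simp only
    rw [hx]
    nlinarith [hexp]
  have := le_csInf (hproj.image _) key
  linarith
end

section
/- Let X ⊆ ℝⁿ be nonempty and closed and let q(x) := ½·dist²(x; X) with the Euclidean distance. Then q is (Fréchet) differentiable at a point x ∈ ℝⁿ if and only if the Euclidean projection set proj_X(x) is a singleton, and in that case ∇q(x) = x − proj_X(x). -/
open Filter Topology Metric Set
open scoped RealInnerProductSpace

/-- Continuity of the projection at a point where the projection is unique. -/
lemma proj_cont {n : ℕ} (X : Set (En n)) (hX : IsClosed X) (x y : En n)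
    (hproj : projSet X x = {y}) {ε : ℝ} (hε : 0 < ε) :
    ∃ δ > 0, ∀ z p : En n, p ∈ X → dist z p = infDist z X → dist z x < δ →
      dist p y < ε := by
  have hy : y ∈ projSet X x := by rw [hproj]; exact rfl
  obtain ⟨hyX, hyd⟩ := hy
  set d := infDist x X with hd
  set K := (closedBall x (d + 2) ∩ X) \ ball y ε with hK
  have hKc : IsCompact K := by
    apply (isCompact_closedBall x (d + 2)).of_isClosed_subset
    · rw [hK, diff_eq]
      exact ((isClosed_closedBall.inter hX)).inter isOpen_ball.isClosed_compl
    · intro p hp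
      exact hp.1.1
  -- generic fact: nearby points have projections in the ball `closedBall x (d+2)`
  have hball : ∀ z p : En n, p ∈ X → dist z p = infDist z X → dist z x < 1 →
      p ∈ closedBall x (d + 2) := by
    intro z p hp hzp hz
    have h1 : infDist z X ≤ d + dist z x := by
      calc infDist z X ≤ infDist x X + dist z x := infDist_le_infDist_add_dist
        _ = d + dist z x := rfl
    have : dist p x ≤ dist p z + dist z x := dist_triangle p z x
    rw [dist_comm p z, hzp] at this
    have : dist p x ≤ d + 2 * dist z x := by linarith
    exact mem_closedBall.2 (by nlinarith [dist_nonneg (x := z) (y := x)])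
  rcases eq_empty_or_nonempty K with hKe | hKe
  · refine ⟨1, one_pos, fun z p hp hzp hz => ?_⟩
    by_contra hcon
    push_neg at hcon
    have : p ∈ K := ⟨⟨hball z p hp hzp hz, hp⟩, fun h => absurd (mem_ball.1 h) (not_lt.2 hcon)⟩
    rw [hKe] at this
    exact this
  · obtain ⟨p₀, hp₀K, hmin⟩ := hKc.exists_isMinOn hKe
      ((continuous_const.dist continuous_id).continuousOn (f := fun p => dist x p))
    set m := dist x p₀ with hm
    have hmd : d < m := by
      rcases lt_or_eq_of_le (infDist_le_dist_of_mem hp₀K.1.2) with h | h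
      · exact h
      · exfalso
        have : p₀ ∈ projSet X x := ⟨hp₀K.1.2, h.symm⟩
        rw [hproj] at this
        have : p₀ = y := this
        have hnb := hp₀K.2
        rw [this] at hnb
        exact hnb (mem_ball_self hε)
    refine ⟨min 1 ((m - d) / 2), lt_min one_pos (by linarith), fun z p hp hzp hz => ?_⟩
    have hz1 : dist z x < 1 := lt_of_lt_of_le hz (min_le_left _ _)
    have hz2 : dist z x < (m - d) / 2 := lt_of_lt_of_le hz (min_le_right _ _)
    by_contra hcon
    push_neg at hcon
    have hpK : p ∈ K := ⟨⟨hball z p hp hzp hz1, hp⟩,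
      fun h => absurd (mem_ball.1 h) (not_lt.2 hcon)⟩
    have h1 : m ≤ dist x p := hmin hpK
    have h2 : dist x p ≤ dist x z + dist z p := dist_triangle x z p
    have h3 : infDist z X ≤ d + dist z x := by
      calc infDist z X ≤ infDist x X + dist z x := infDist_le_infDist_add_dist
        _ = d + dist z x := rfl
    rw [hzp, dist_comm x z] at h2
    linarith

/-- gradient of `z ↦ ‖z - y‖² / 2` -/
lemma grad_half_norm_sq {n : ℕ} (y x : En n) :
    HasGradientAt (fun z : En n => ‖z - y‖ ^ 2 / 2) (x - y) x := by
  have h1 : HasFDerivAt (fun z : En n => z - y) (ContinuousLinearMap.id ℝ (En n)) x :=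
    (hasFDerivAt_id x).sub_const y
  have h2 := h1.norm_sq
  have h3 := h2.const_mul (1/2 : ℝ)
  have heq : (fun z : En n => ‖z - y‖ ^ 2 / 2) = fun z : En n => (1/2 : ℝ) * ‖z - y‖ ^ 2 := by
    funext z; ring
  rw [hasGradientAt_iff_hasFDerivAt, heq]
  convert h3 using 1
  ext w
  simp [InnerProductSpace.toDual_apply_apply, real_inner_smul_left]
  ext w
  simp [InnerProductSpace.toDual_apply_apply, real_inner_smul_left]

set_option maxHeartbeats 800000 in
/-- The hard analytic direction: unique projection implies differentiability. -/
lemma key_grad {n : ℕ} (X : Set (En n)) (hX : IsClosed X) (hne : X.Nonempty)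
    (x y : En n) (hproj : projSet X x = {y}) :
    HasGradientAt (fun z => infDist z X ^ 2 / 2) (x - y) x := by
  have hy : y ∈ projSet X x := by rw [hproj]; exact rfl
  obtain ⟨hyX, hyd⟩ := hy
  have hxy : ‖x - y‖ = infDist x X := by rw [← dist_eq_norm]; exact hyd
  rw [hasGradientAt_iff_isLittleO, Asymptotics.isLittleO_iff]
  intro c hc
  obtain ⟨δ, hδ, hδp⟩ := proj_cont X hX x y hproj (half_pos hc)
  have hev : ∀ z : En n, dist z x < min δ (c / 3) →
      ‖infDist z X ^ 2 / 2 - infDist x X ^ 2 / 2 - ⟪x - y, z - x⟫‖ ≤ c * ‖z - x‖ := by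
    intro z hz
    have hz1 : dist z x < δ := lt_of_lt_of_le hz (min_le_left _ _)
    have hz2 : dist z x < c / 3 := lt_of_lt_of_le hz (min_le_right _ _)
    have hzx : ‖z - x‖ = dist z x := (dist_eq_norm z x).symm
    obtain ⟨p, hpX, hpd⟩ := hX.exists_infDist_eq_dist hne z
    have hzp : dist z p = infDist z X := hpd.symm
    have hpy : dist p y < c / 2 := hδp z p hpX hzp hz1
    set E := infDist z X ^ 2 / 2 - infDist x X ^ 2 / 2 - ⟪x - y, z - x⟫ with hE
    -- upper bound
    have hub : E ≤ ‖z - x‖ ^ 2 / 2 := by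
      have h1 : infDist z X ≤ ‖z - y‖ := by
        rw [← dist_eq_norm]; exact infDist_le_dist_of_mem hyX
      have h1' : infDist z X ^ 2 ≤ ‖z - y‖ ^ 2 :=
        pow_le_pow_left₀ (infDist_nonneg) h1 2
      have hexp : ‖z - y‖ ^ 2 = ‖z - x‖ ^ 2 + 2 * ⟪z - x, x - y⟫ + ‖x - y‖ ^ 2 := by
        have : z - y = (z - x) + (x - y) := by abel
        rw [this, norm_add_sq_real]
      have hinner : ⟪x - y, z - x⟫ = ⟪z - x, x - y⟫ := real_inner_comm _ _
      rw [hE, hinner, ← hxy]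
      nlinarith
    -- lower bound
    have hlb : -(c * ‖z - x‖) ≤ E := by
      have h1 : infDist x X ≤ ‖x - p‖ := by
        rw [← dist_eq_norm]; exact infDist_le_dist_of_mem hpX
      have h1' : infDist x X ^ 2 ≤ ‖x - p‖ ^ 2 :=
        pow_le_pow_left₀ (infDist_nonneg) h1 2
      have hzpn : ‖z - p‖ = infDist z X := by rw [← dist_eq_norm]; exact hzp
      have hexp : ‖x - p‖ ^ 2 = ‖x - z‖ ^ 2 + 2 * ⟪x - z, z - p⟫ + ‖z - p‖ ^ 2 := by
        have : x - p = (x - z) + (z - p) := by abel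
        rw [this, norm_add_sq_real]
      -- E ≥ ⟪z - x, (z - p) - (x - y)⟫ - ‖z - x‖²/2
      have hE2 : ⟪z - x, (z - p) - (x - y)⟫ - ‖z - x‖ ^ 2 / 2 ≤ E := by
        have hsplit : ⟪z - x, (z - p) - (x - y)⟫ =
            ⟪z - x, z - p⟫ - ⟪z - x, x - y⟫ := inner_sub_right _ _ _
        have hneg : ⟪x - z, z - p⟫ = -⟪z - x, z - p⟫ := by
          rw [show x - z = -(z - x) by abel, inner_neg_left]
        have hinner : ⟪x - y, z - x⟫ = ⟪z - x, x - y⟫ := real_inner_comm _ _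
        have hnxz : ‖x - z‖ = ‖z - x‖ := norm_sub_rev x z
        rw [hE, hinner, hsplit]
        rw [hzpn] at hexp
        nlinarith
      have hbnd : ‖(z - p) - (x - y)‖ ≤ ‖z - x‖ + c / 2 := by
        have : (z - p) - (x - y) = (z - x) - (p - y) := by abel
        rw [this]
        calc ‖(z - x) - (p - y)‖ ≤ ‖z - x‖ + ‖p - y‖ := norm_sub_le _ _
          _ ≤ ‖z - x‖ + c / 2 := by
              have : ‖p - y‖ = dist p y := (dist_eq_norm p y).symm
              linarith [hpy, this.le, this.ge]
      have hcs : -(‖z - x‖ * ‖(z - p) - (x - y)‖) ≤ ⟪z - x, (z - p) - (x - y)⟫ := by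
        have := abs_real_inner_le_norm (z - x) ((z - p) - (x - y))
        linarith [neg_abs_le ⟪z - x, (z - p) - (x - y)⟫]
      have hnz : ‖z - x‖ < c / 3 := by rw [hzx]; exact hz2
      have hnzn : (0:ℝ) ≤ ‖z - x‖ := norm_nonneg _
      have hsq : ‖z - x‖ ^ 2 = ‖z - x‖ * ‖z - x‖ := by ring
      have hExp : ‖z - x‖ * (‖z - x‖ + c / 2) = ‖z - x‖ * ‖z - x‖ + (c / 2) * ‖z - x‖ := by
        ring
      have hA : -(‖z - x‖ * (‖z - x‖ + c / 2)) ≤ ⟪z - x, (z - p) - (x - y)⟫ := by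
        nlinarith [mul_le_mul_of_nonneg_left hbnd hnzn]
      have hB : ‖z - x‖ * ‖z - x‖ ≤ ‖z - x‖ * (c / 3) :=
        mul_le_mul_of_nonneg_left hnz.le hnzn
      have hC : -(‖z - x‖ * (‖z - x‖ + c / 2)) - ‖z - x‖ ^ 2 / 2 ≤ E := by linarith
      have hD : -(c * ‖z - x‖) ≤ -(‖z - x‖ * (‖z - x‖ + c / 2)) - ‖z - x‖ ^ 2 / 2 := by
        nlinarith [mul_nonneg hc.le hnzn]
      exact le_trans hD hC
    have hub' : E ≤ c * ‖z - x‖ := by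
      have hnz : ‖z - x‖ < c / 3 := by rw [hzx]; exact hz2
      have hnzn : (0:ℝ) ≤ ‖z - x‖ := norm_nonneg _
      have hB : ‖z - x‖ * ‖z - x‖ ≤ ‖z - x‖ * (c / 3) :=
        mul_le_mul_of_nonneg_left hnz.le hnzn
      calc E ≤ ‖z - x‖ ^ 2 / 2 := hub
        _ = ‖z - x‖ * ‖z - x‖ / 2 := by ring
        _ ≤ ‖z - x‖ * (c / 3) / 2 := by linarith
        _ ≤ c * ‖z - x‖ := by nlinarith [mul_nonneg hc.le hnzn]
    rw [Real.norm_eq_abs, abs_le]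
    exact ⟨hlb, hub'⟩
  filter_upwards [Metric.ball_mem_nhds x (ε := min δ (c / 3)) (lt_min hδ (by linarith))] with z hz
  exact hev z (mem_ball.1 hz)

/-- For a nonempty closed `X ⊆ ℝⁿ`, `q(x) = ½ dist²(x;X)` is (Fréchet) differentiable at `x`
iff `proj_X(x)` is a singleton, in which case `∇q(x) = x − proj_X(x)`. -/
theorem stmt4 {n : ℕ} (X : Set (En n)) (hX : IsClosed X) (hne : X.Nonempty) (x : En n) :
    (DifferentiableAt ℝ (fun z => infDist z X ^ 2 / 2) x ↔ ∃ y, projSet X x = {y}) ∧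
    (∀ y, projSet X x = {y} →
      HasGradientAt (fun z => infDist z X ^ 2 / 2) (x - y) x) := by
  constructor
  · constructor
    · -- differentiable → unique projection
      intro hd
      obtain ⟨y₀, hy₀X, hy₀d⟩ := hX.exists_infDist_eq_dist hne x
      have hy₀ : y₀ ∈ projSet X x := ⟨hy₀X, hy₀d.symm⟩
      -- every projection y satisfies: fderiv at x equals innerSL (x - y)
      have hkey : ∀ y ∈ projSet X x,
          fderiv ℝ (fun z => infDist z X ^ 2 / 2) x =
            (InnerProductSpace.toDual ℝ (En n)) (x - y) := by
        intro y hy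
        obtain ⟨hyX, hyd⟩ := hy
        set f : En n → ℝ := fun z => infDist z X ^ 2 / 2 with hf
        set g : En n → ℝ := fun z => ‖z - y‖ ^ 2 / 2 with hg
        have hgd : HasFDerivAt g ((InnerProductSpace.toDual ℝ (En n)) (x - y)) x :=
          (grad_half_norm_sq y x).hasFDerivAt
        have hfd : HasFDerivAt f (fderiv ℝ f x) x := hd.hasFDerivAt
        have hmin : IsLocalMin (fun z => g z - f z) x := by
          apply Filter.Eventually.of_forall
          intro z
          have h1 : infDist z X ≤ ‖z - y‖ := by
            rw [← dist_eq_norm]; exact infDist_le_dist_of_mem hyX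
          have h2 : infDist z X ^ 2 ≤ ‖z - y‖ ^ 2 := pow_le_pow_left₀ infDist_nonneg h1 2
          have h3 : infDist x X = ‖x - y‖ := by rw [← dist_eq_norm]; exact hyd.symm
          simp only [hg, hf]
          rw [h3]
          linarith
        have := hmin.hasFDerivAt_eq_zero (hgd.sub hfd)
        have h0 : (InnerProductSpace.toDual ℝ (En n)) (x - y) = fderiv ℝ f x := by
          rwa [sub_eq_zero] at this
        exact h0.symm
      refine ⟨y₀, ?_⟩
      ext z
      simp only [mem_singleton_iff]
      constructor
      · intro hz
        have h1 := hkey z hz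
        have h2 := hkey y₀ hy₀
        rw [h1] at h2
        have := (InnerProductSpace.toDual ℝ (En n)).injective h2
        exact sub_right_injective this
      · intro hz; rw [hz]; exact hy₀
    · rintro ⟨y, hy⟩
      exact (key_grad X hX hne x y hy).differentiableAt
  · intro y hy
    exact key_grad X hX hne x y hy
end

section
/- Let X₁ ⊆ ℝ^{m₁}, …, X_k ⊆ ℝ^{m_k} be nonempty closed sets and, for x = (x¹,…,x^k), let q(x) := ½ Σ_{i=1}^k dist²(xⁱ; X_i) with Euclidean distances. Then q is semi-differentiable everywhere with semi-derivative d q(x)(w¹,…,w^k) = Σ_{i=1}^k min{ ⟨xⁱ − yⁱ, wⁱ⟩ : yⁱ ∈ proj_{X_i}(xⁱ) }, and for all x, y one has the descent estimate q(y) ≤ q(x) + d q(x)(y − x) + (k/2)‖y − x‖². -/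
open Filter Topology Metric Set
open scoped RealInnerProductSpace

section Aux

variable {n : ℕ} {X : Set (EuclideanSpace ℝ (Fin n))}

lemma projSet_nonempty (hX : IsClosed X) (hne : X.Nonempty)
    (x : EuclideanSpace ℝ (Fin n)) : (projSet X x).Nonempty := by
  obtain ⟨y, hy, hdy⟩ := hX.exists_infDist_eq_dist hne x
  exact ⟨y, hy, hdy.symm⟩

lemma sq_half_expand (v u : EuclideanSpace ℝ (Fin n)) (t : ℝ) :
    ‖v + t • u‖ ^ 2 / 2 = ‖v‖ ^ 2 / 2 + t * ⟪v, u⟫ + t ^ 2 * ‖u‖ ^ 2 / 2 := by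
  rw [norm_add_sq_real, real_inner_smul_right, norm_smul, mul_pow, Real.norm_eq_abs, sq_abs]
  ring

lemma infDist_sq_of_proj {x y : EuclideanSpace ℝ (Fin n)} (hy : y ∈ projSet X x) :
    infDist x X ^ 2 / 2 = ‖x - y‖ ^ 2 / 2 := by rw [hy.2.symm, dist_eq_norm]

lemma infDist_sq_le {x y : EuclideanSpace ℝ (Fin n)} (hy : y ∈ X) :
    infDist x X ^ 2 / 2 ≤ ‖x - y‖ ^ 2 / 2 := by
  have h1 := infDist_le_dist_of_mem (x := x) hy
  have h0 := infDist_nonneg (x := x) (s := X)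
  rw [dist_eq_norm] at h1
  nlinarith

lemma bddBelow_inner_proj (x w : EuclideanSpace ℝ (Fin n)) :
    BddBelow ((fun y => ⟪x - y, w⟫) '' projSet X x) := by
  refine ⟨-(infDist x X * ‖w‖), ?_⟩
  rintro b ⟨y, hy, rfl⟩
  have h1 : |⟪x - y, w⟫| ≤ ‖x - y‖ * ‖w‖ := abs_real_inner_le_norm _ _
  rw [← dist_eq_norm, hy.2] at h1
  linarith [(abs_le.mp h1).1]

lemma exists_min (hX : IsClosed X) (hne : X.Nonempty) (x w : EuclideanSpace ℝ (Fin n)) :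
    ∃ y ∈ projSet X x,
      sInf ((fun y => ⟪x - y, w⟫) '' projSet X x) = ⟪x - y, w⟫ := by
  have hcl : IsClosed (projSet X x) := by
    have : projSet X x = X ∩ (fun y => dist x y) ⁻¹' {infDist x X} := by
      ext y; simp [projSet, Set.mem_setOf_eq]
    rw [this]
    exact hX.inter (isClosed_singleton.preimage (Continuous.dist continuous_const continuous_id))
  have hbd : Bornology.IsBounded (projSet X x) := by
    apply (Metric.isBounded_closedBall (x := x) (r := infDist x X)).subset
    intro y hy
    simp [Metric.mem_closedBall, dist_comm, hy.2.le]
  have hc : IsCompact (projSet X x) := Metric.isCompact_of_isClosed_isBounded hcl hbd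
  obtain ⟨y, hy, hmin⟩ := hc.exists_isMinOn (projSet_nonempty hX hne x)
    (Continuous.continuousOn
      ((continuous_const.sub continuous_id).inner continuous_const) :
      ContinuousOn (fun y => ⟪x - y, w⟫) _)
  refine ⟨y, hy, IsLeast.csInf_eq ⟨Set.mem_image_of_mem _ hy, ?_⟩⟩
  rintro b ⟨z, hz, rfl⟩
  exact hmin hz

lemma key (hX : IsClosed X) (hne : X.Nonempty) (x w : EuclideanSpace ℝ (Fin n))
    {ε : ℝ} (hε : 0 < ε) :
    ∃ δ > 0, ∀ u y w', dist u x < δ → y ∈ projSet X u → dist w' w < δ →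
      sInf ((fun y => ⟪x - y, w⟫) '' projSet X x) - ε < ⟪x - y, w'⟫ := by
  by_contra hcon
  push_neg at hcon
  choose u y w' h1 h2 h3 h4 using fun j : ℕ => hcon (1/(j+1)) (by positivity)
  have hj : Tendsto (fun j : ℕ => 1/((j:ℝ)+1)) atTop (𝓝 0) :=
    tendsto_one_div_add_atTop_nhds_zero_nat
  have hu : Tendsto u atTop (𝓝 x) := by
    rw [tendsto_iff_dist_tendsto_zero]
    exact squeeze_zero (fun j => dist_nonneg) (fun j => (h1 j).le) hj
  have hw' : Tendsto w' atTop (𝓝 w) := by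
    rw [tendsto_iff_dist_tendsto_zero]
    exact squeeze_zero (fun j => dist_nonneg) (fun j => (h3 j).le) hj
  -- y j is bounded
  have hyb : ∀ j, y j ∈ closedBall x (infDist x X + 2) := by
    intro j
    have hd : dist (u j) (y j) = infDist (u j) X := (h2 j).2
    have h5 : infDist (u j) X ≤ infDist x X + dist (u j) x := infDist_le_infDist_add_dist
    have h6 : dist (y j) x ≤ dist (y j) (u j) + dist (u j) x := dist_triangle _ _ _
    have h7 : dist (u j) x < 1 := lt_of_lt_of_le (h1 j) (by
      rw [div_le_one (by positivity)]; linarith [Nat.cast_nonneg (α := ℝ) j])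
    rw [Metric.mem_closedBall]
    rw [dist_comm] at hd
    linarith
  obtain ⟨a, _, φ, hφ, hya⟩ := tendsto_subseq_of_bounded Metric.isBounded_closedBall hyb
  have haX : a ∈ X :=
    hX.mem_of_tendsto hya (Eventually.of_forall fun j => (h2 (φ j)).1)
  have huφ : Tendsto (u ∘ φ) atTop (𝓝 x) := hu.comp hφ.tendsto_atTop
  have hwφ : Tendsto (w' ∘ φ) atTop (𝓝 w) := hw'.comp hφ.tendsto_atTop
  have hda : dist x a = infDist x X := by
    have t1 : Tendsto (fun j => dist (u (φ j)) (y (φ j))) atTop (𝓝 (dist x a)) :=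
      huφ.dist hya
    have t2 : Tendsto (fun j => infDist (u (φ j)) X) atTop (𝓝 (infDist x X)) :=
      ((continuous_infDist_pt X).tendsto x).comp huφ
    exact tendsto_nhds_unique (t1.congr fun j => (h2 (φ j)).2) t2
  have haP : a ∈ projSet X x := ⟨haX, hda⟩
  have hle : sInf ((fun y => ⟪x - y, w⟫) '' projSet X x) ≤ ⟪x - a, w⟫ :=
    csInf_le (bddBelow_inner_proj x w) (Set.mem_image_of_mem _ haP)
  have tinner : Tendsto (fun j => ⟪x - y (φ j), w' (φ j)⟫) atTop (𝓝 ⟪x - a, w⟫) :=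
    Tendsto.inner (tendsto_const_nhds.sub hya) hwφ
  have : ⟪x - a, w⟫ ≤ sInf ((fun y => ⟪x - y, w⟫) '' projSet X x) - ε :=
    le_of_tendsto tinner (Eventually.of_forall fun j => h4 (φ j))
  linarith

lemma core (hX : IsClosed X) (hne : X.Nonempty) (x : EuclideanSpace ℝ (Fin n)) :
    HasSemiDerivAt (fun z => infDist z X ^ 2 / 2) x
      (fun w => sInf ((fun y => ⟪x - y, w⟫) '' projSet X x)) := by
  intro w
  set g := sInf ((fun y => ⟪x - y, w⟫) '' projSet X x) with hg
  have hfil : (𝓝[>] (0:ℝ)) ×ˢ 𝓝 w ≤ 𝓝 ((0:ℝ), w) := by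
    rw [nhds_prod_eq]
    exact Filter.prod_mono nhdsWithin_le_nhds le_rfl
  have ev1 : ∀ᶠ p : ℝ × EuclideanSpace ℝ (Fin n) in (𝓝[>] (0:ℝ)) ×ˢ 𝓝 w, 0 < p.1 := by
    filter_upwards [Filter.prod_mem_prod self_mem_nhdsWithin Filter.univ_mem] with p hp
    exact hp.1
  rw [tendsto_order]
  constructor
  · intro a ha
    obtain ⟨δ, hδ, hkey⟩ := key hX hne x w (ε := g - a) (by linarith)
    have ev2 : ∀ᶠ p : ℝ × EuclideanSpace ℝ (Fin n) in (𝓝[>] (0:ℝ)) ×ˢ 𝓝 w,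
        dist p.2 w < δ :=
      tendsto_snd.eventually (by filter_upwards [Metric.ball_mem_nhds w hδ] with v hv using hv)
    have ev3 : ∀ᶠ p : ℝ × EuclideanSpace ℝ (Fin n) in (𝓝[>] (0:ℝ)) ×ˢ 𝓝 w,
        p.1 * ‖p.2‖ < δ := by
      have hc : Tendsto (fun p : ℝ × EuclideanSpace ℝ (Fin n) => p.1 * ‖p.2‖)
          ((𝓝[>] (0:ℝ)) ×ˢ 𝓝 w) (𝓝 (0 * ‖w‖)) :=
        ((continuous_fst.mul (continuous_norm.comp continuous_snd)).tendsto _).mono_left hfil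
      exact hc.eventually (gt_mem_nhds (by simpa using hδ))
    filter_upwards [ev1, ev2, ev3] with p hp1 hp2 hp3
    obtain ⟨y, hy⟩ := projSet_nonempty hX hne (x + p.1 • p.2)
    have hdist : dist (x + p.1 • p.2) x < δ := by
      rw [dist_eq_norm, add_sub_cancel_left, norm_smul, Real.norm_eq_abs,
        abs_of_pos hp1]
      exact hp3
    have hinner : a < ⟪x - y, p.2⟫ := by
      have := hkey (x + p.1 • p.2) y p.2 hdist hy hp2
      linarith
    have hF1 : infDist (x + p.1 • p.2) X ^ 2 / 2 = ‖(x - y) + p.1 • p.2‖ ^ 2 / 2 := by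
      rw [infDist_sq_of_proj hy]
      congr 2
      abel
    have hF2 : infDist x X ^ 2 / 2 ≤ ‖x - y‖ ^ 2 / 2 := infDist_sq_le hy.1
    have hD : p.1 * a < infDist (x + p.1 • p.2) X ^ 2 / 2 - infDist x X ^ 2 / 2 := by
      rw [hF1]
      rw [sq_half_expand]
      nlinarith [sq_nonneg p.1, norm_nonneg p.2, mul_pos hp1 hp1]
    have ht' : (0:ℝ) < p.1⁻¹ := inv_pos.2 hp1
    calc a = p.1⁻¹ * (p.1 * a) := by field_simp
    _ < p.1⁻¹ * (infDist (x + p.1 • p.2) X ^ 2 / 2 - infDist x X ^ 2 / 2) :=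
        mul_lt_mul_of_pos_left hD ht'
    _ = p.1⁻¹ • ((fun z => infDist z X ^ 2 / 2) (x + p.1 • p.2)
          - (fun z => infDist z X ^ 2 / 2) x) := by rw [smul_eq_mul]
  · intro b hb
    obtain ⟨ys, hys, hmin⟩ := exists_min hX hne x w
    have hφ : Tendsto (fun p : ℝ × EuclideanSpace ℝ (Fin n) =>
        ⟪x - ys, p.2⟫ + p.1 * ‖p.2‖ ^ 2 / 2) ((𝓝[>] (0:ℝ)) ×ˢ 𝓝 w)
        (𝓝 (⟪x - ys, w⟫ + 0 * ‖w‖ ^ 2 / 2)) := by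
      refine ((Continuous.tendsto ?_ _).mono_left hfil)
      exact ((continuous_const.inner continuous_snd).add
        ((continuous_fst.mul ((continuous_snd.norm).pow 2)).div_const 2))
    have hb' : g < b := hb
    have hgb : ⟪x - ys, w⟫ + 0 * ‖w‖ ^ 2 / 2 < b := by
      rw [hg, hmin] at hb'
      linarith
    have ev4 := hφ.eventually (gt_mem_nhds hgb)
    filter_upwards [ev1, ev4] with p hp1 hp4
    have hF1 : infDist (x + p.1 • p.2) X ^ 2 / 2 ≤ ‖(x - ys) + p.1 • p.2‖ ^ 2 / 2 := by
      have := infDist_sq_le (x := x + p.1 • p.2) hys.1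
      calc infDist (x + p.1 • p.2) X ^ 2 / 2 ≤ ‖x + p.1 • p.2 - ys‖ ^ 2 / 2 := this
      _ = ‖(x - ys) + p.1 • p.2‖ ^ 2 / 2 := by congr 2; abel
    have hF2 : infDist x X ^ 2 / 2 = ‖x - ys‖ ^ 2 / 2 := infDist_sq_of_proj hys
    have hD : infDist (x + p.1 • p.2) X ^ 2 / 2 - infDist x X ^ 2 / 2
        ≤ p.1 * (⟪x - ys, p.2⟫ + p.1 * ‖p.2‖ ^ 2 / 2) := by
      rw [hF2]
      have := sq_half_expand (x - ys) p.2 p.1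
      nlinarith
    have ht' : (0:ℝ) < p.1⁻¹ := inv_pos.2 hp1
    calc p.1⁻¹ • ((fun z => infDist z X ^ 2 / 2) (x + p.1 • p.2)
          - (fun z => infDist z X ^ 2 / 2) x)
        = p.1⁻¹ * (infDist (x + p.1 • p.2) X ^ 2 / 2 - infDist x X ^ 2 / 2) := by
          rw [smul_eq_mul]
    _ ≤ p.1⁻¹ * (p.1 * (⟪x - ys, p.2⟫ + p.1 * ‖p.2‖ ^ 2 / 2)) :=
        mul_le_mul_of_nonneg_left hD ht'.le
    _ = ⟪x - ys, p.2⟫ + p.1 * ‖p.2‖ ^ 2 / 2 := by field_simp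
    _ < b := hp4

lemma descent_single (hX : IsClosed X) (hne : X.Nonempty)
    (x y : EuclideanSpace ℝ (Fin n)) :
    infDist y X ^ 2 / 2 ≤ infDist x X ^ 2 / 2
      + sInf ((fun z => ⟪x - z, y - x⟫) '' projSet X x) + ‖y - x‖ ^ 2 / 2 := by
  have hne' : ((fun z => ⟪x - z, y - x⟫) '' projSet X x).Nonempty :=
    (projSet_nonempty hX hne x).image _
  have h := le_csInf hne' (a := infDist y X ^ 2 / 2 - infDist x X ^ 2 / 2 - ‖y - x‖ ^ 2 / 2) ?_
  · linarith
  · rintro b ⟨z, hz, rfl⟩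
    have h1 : infDist y X ^ 2 / 2 ≤ ‖y - z‖ ^ 2 / 2 := infDist_sq_le hz.1
    have h2 : infDist x X ^ 2 / 2 = ‖x - z‖ ^ 2 / 2 := infDist_sq_of_proj hz
    have h3 : y - z = (x - z) + (1:ℝ) • (y - x) := by
      rw [one_smul]; abel
    have h4 := sq_half_expand (x - z) (y - x) 1
    rw [h3] at h1
    rw [h4] at h1
    simp only [one_mul, one_pow] at h1
    linarith

end Aux

/-- Separable sum of squared distances: for nonempty closed sets `Xᵢ ⊆ ℝ^{mᵢ}`, the function
`q(x) = ½ Σᵢ dist²(xⁱ; Xᵢ)` on the (L²-)product space is semi-differentiable everywhere with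
semi-derivative `w ↦ Σᵢ min{⟨xⁱ − yⁱ, wⁱ⟩ : yⁱ ∈ proj_{Xᵢ}(xⁱ)}`, and satisfies the descent
estimate `q(y) ≤ q(x) + d q(x)(y − x) + (k/2)‖y − x‖²`. -/
theorem stmt5 {k : ℕ} {m : Fin k → ℕ}
    (X : ∀ i, Set (EuclideanSpace ℝ (Fin (m i))))
    (hX : ∀ i, IsClosed (X i)) (hne : ∀ i, (X i).Nonempty) :
    (∀ x : PiLp 2 (fun i => EuclideanSpace ℝ (Fin (m i))),
      HasSemiDerivAt (fun z => (∑ i, infDist (z i) (X i) ^ 2) / 2) x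
        (fun w => ∑ i, sInf ((fun y => (inner ℝ (x i - y) (w i) : ℝ)) '' projSet (X i) (x i)))) ∧
    (∀ x y : PiLp 2 (fun i => EuclideanSpace ℝ (Fin (m i))),
      (∑ i, infDist (y i) (X i) ^ 2) / 2 ≤ (∑ i, infDist (x i) (X i) ^ 2) / 2
        + (∑ i, sInf ((fun z => (inner ℝ (x i - z) (y i - x i) : ℝ)) '' projSet (X i) (x i)))
        + (k / 2 : ℝ) * ‖y - x‖ ^ 2) := by
  constructor
  · intro x w
    have hconv : ∀ p : ℝ × PiLp 2 (fun i => EuclideanSpace ℝ (Fin (m i))),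
        p.1⁻¹ • ((∑ i, infDist ((x + p.1 • p.2) i) (X i) ^ 2) / 2
          - (∑ i, infDist (x i) (X i) ^ 2) / 2)
        = ∑ i, p.1⁻¹ • (infDist ((x i) + p.1 • (p.2 i)) (X i) ^ 2 / 2
            - infDist (x i) (X i) ^ 2 / 2) := by
      intro p
      simp only [smul_eq_mul, PiLp.add_apply, PiLp.smul_apply, ← Finset.mul_sum,
        Finset.sum_sub_distrib, Finset.sum_div]
    refine Tendsto.congr (fun p => (hconv p).symm) ?_
    apply tendsto_finset_sum
    intro i _
    have hψ : Tendsto (fun p : ℝ × PiLp 2 (fun i => EuclideanSpace ℝ (Fin (m i))) =>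
        (p.1, p.2 i)) ((𝓝[>] (0:ℝ)) ×ˢ 𝓝 w) ((𝓝[>] (0:ℝ)) ×ˢ 𝓝 (w i)) :=
      tendsto_fst.prodMk (((PiLp.continuous_apply 2 _ i).tendsto w).comp tendsto_snd)
    exact ((core (hX i) (hne i) (x i)) (w i)).comp hψ
  · intro x y
    have hterm : ∀ i, infDist (y i) (X i) ^ 2 / 2 ≤ infDist (x i) (X i) ^ 2 / 2
        + sInf ((fun z => (inner ℝ (x i - z) (y i - x i) : ℝ)) '' projSet (X i) (x i))
        + ‖y i - x i‖ ^ 2 / 2 := fun i => descent_single (hX i) (hne i) (x i) (y i)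
    have hnorm : ∑ i, ‖y i - x i‖ ^ 2 = ‖y - x‖ ^ 2 := by
      rw [PiLp.norm_sq_eq_of_L2]
      exact Finset.sum_congr rfl fun i _ => by rw [PiLp.sub_apply]
    have e1 : (∑ i, infDist (y i) (X i) ^ 2) / 2 = ∑ i, infDist (y i) (X i) ^ 2 / 2 :=
      Finset.sum_div _ _ _
    have e2 : (∑ i, infDist (x i) (X i) ^ 2) / 2 = ∑ i, infDist (x i) (X i) ^ 2 / 2 :=
      Finset.sum_div _ _ _
    have e3 : ∑ i, ‖y i - x i‖ ^ 2 / 2 = ‖y - x‖ ^ 2 / 2 := by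
      rw [← Finset.sum_div, hnorm]
    have hlast : ‖y - x‖ ^ 2 / 2 ≤ (k / 2 : ℝ) * ‖y - x‖ ^ 2 := by
      rcases Nat.eq_zero_or_pos k with hk | hk
      · have h0 : ‖y - x‖ ^ 2 = 0 := by
          rw [← hnorm]
          subst hk
          simp
        rw [h0]
        simp
      · have h1 : (1:ℝ) ≤ k := by exact_mod_cast hk
        nlinarith [sq_nonneg ‖y - x‖]
    have hsum2 : ∑ i, infDist (y i) (X i) ^ 2 / 2 ≤ ∑ i, infDist (x i) (X i) ^ 2 / 2
        + (∑ i, sInf ((fun z => (inner ℝ (x i - z) (y i - x i) : ℝ)) '' projSet (X i) (x i)))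
        + ∑ i, ‖y i - x i‖ ^ 2 / 2 := by
      calc ∑ i, infDist (y i) (X i) ^ 2 / 2
          ≤ ∑ i, (infDist (x i) (X i) ^ 2 / 2
            + sInf ((fun z => (inner ℝ (x i - z) (y i - x i) : ℝ)) '' projSet (X i) (x i))
            + ‖y i - x i‖ ^ 2 / 2) := Finset.sum_le_sum fun i _ => hterm i
        _ = _ := by rw [Finset.sum_add_distrib, Finset.sum_add_distrib]
    linarith
end

section
/- Let ‖·‖_* be a norm on ℝⁿ that is Fréchet differentiable on ℝⁿ∖{0}, with gradient ξ(x) at x ≠ 0. Let X ⊆ ℝⁿ be nonempty closed, p(x) := dist_*(x; X) the distance to X in the norm ‖·‖_*, and proj*_X(x) the set of nearest points in that norm. Then for every x ∉ X, the subderivative of p at x is d p(x)(w) = min { ⟨ξ(x − y), w⟩ : y ∈ proj*_X(x) } for all w ∈ ℝⁿ. -/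
open Filter Topology Metric Set

/-- Distance to `X` in the norm `N`. -/
noncomputable def distN {V : Type*} [NormedAddCommGroup V] [NormedSpace ℝ V]
    (N : V → ℝ) (x : V) (X : Set V) : ℝ :=
  sInf ((fun y => N (x - y)) '' X)

/-- Projection set onto `X` in the norm `N`. -/
noncomputable def projN {V : Type*} [NormedAddCommGroup V] [NormedSpace ℝ V]
    (N : V → ℝ) (X : Set V) (x : V) : Set V :=
  {y ∈ X | N (x - y) = distN N x X}


section Aux
variable {n : ℕ} {N : En n → ℝ}

lemma myN_zero (hNsmul : ∀ (a : ℝ) z, N (a • z) = |a| * N z) : N 0 = 0 := by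
  have := hNsmul 0 0; simpa using this

lemma myN_neg (hNsmul : ∀ (a : ℝ) z, N (a • z) = |a| * N z) (z : En n) : N (-z) = N z := by
  have := hNsmul (-1) z; simpa using this

lemma myN_nonneg (hNsmul : ∀ (a : ℝ) z, N (a • z) = |a| * N z)
    (hNadd : ∀ z₁ z₂, N (z₁ + z₂) ≤ N z₁ + N z₂) (z : En n) : 0 ≤ N z := by
  have h := hNadd z (-z)
  rw [add_neg_cancel, myN_zero hNsmul, myN_neg hNsmul] at h
  linarith

lemma myN_convex (hNsmul : ∀ (a : ℝ) z, N (a • z) = |a| * N z)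
    (hNadd : ∀ z₁ z₂, N (z₁ + z₂) ≤ N z₁ + N z₂) : ConvexOn ℝ univ N := by
  refine ⟨convex_univ, fun a _ b _ s t hs ht hst => ?_⟩
  calc N (s • a + t • b) ≤ N (s • a) + N (t • b) := hNadd _ _
    _ = s * N a + t * N b := by
        rw [hNsmul, hNsmul, abs_of_nonneg hs, abs_of_nonneg ht]
    _ ≤ _ := le_refl _

lemma myN_line_convex (hNsmul : ∀ (a : ℝ) z, N (a • z) = |a| * N z)
    (hNadd : ∀ z₁ z₂, N (z₁ + z₂) ≤ N z₁ + N z₂) (z v : En n) :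
    ConvexOn ℝ univ (fun t : ℝ => N (z + t • v)) := by
  refine ⟨convex_univ, fun a _ b _ s t hs ht hst => ?_⟩
  have key : z + (s * a + t * b) • v = s • (z + a • v) + t • (z + b • v) := by
    have hz : s • z + t • z = z := by rw [← add_smul, hst, one_smul]
    rw [smul_add, smul_add, smul_smul, smul_smul, add_add_add_comm, hz, add_smul]
  simp only [smul_eq_mul]
  calc N (z + (s * a + t * b) • v) = N (s • (z + a • v) + t • (z + b • v)) := by rw [key]
    _ ≤ s * N (z + a • v) + t * N (z + b • v) :=
        (myN_convex hNsmul hNadd).2 trivial trivial hs ht hst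

end Aux

section Aux2
variable {n : ℕ} {N : En n → ℝ} {ξ : En n → En n}

lemma myN_line_deriv (hξ : ∀ z, z ≠ 0 → HasGradientAt N (ξ z) z)
    {z : En n} (hz : z ≠ 0) (v : En n) :
    HasDerivAt (fun t : ℝ => N (z + t • v)) (inner ℝ (ξ z) v : ℝ) 0 := by
  have hline : HasDerivAt (fun t : ℝ => z + t • v) v 0 := by
    simpa using ((hasDerivAt_id (0 : ℝ)).smul_const v).const_add z
  have hf : HasFDerivAt N (InnerProductSpace.toDual ℝ (En n) (ξ z)) (z + (0 : ℝ) • v) := by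
    simpa using (hξ z hz).hasFDerivAt
  have := hf.comp_hasDerivAt (0 : ℝ) hline
  simp only [InnerProductSpace.toDual_apply_apply] at this
  exact this

lemma myN_subgrad (hNsmul : ∀ (a : ℝ) z, N (a • z) = |a| * N z)
    (hNadd : ∀ z₁ z₂, N (z₁ + z₂) ≤ N z₁ + N z₂)
    (hξ : ∀ z, z ≠ 0 → HasGradientAt N (ξ z) z)
    {z : En n} (hz : z ≠ 0) (v : En n) :
    N z + (inner ℝ (ξ z) v : ℝ) ≤ N (z + v) := by
  have hconv := myN_line_convex hNsmul hNadd z v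
  have hd := myN_line_deriv hξ hz v
  have := hconv.le_slope_of_hasDerivAt (mem_univ (0:ℝ)) (mem_univ (1:ℝ)) one_pos hd
  rw [slope_def_field] at this
  simp only [one_smul, zero_smul, add_zero] at this
  have h2 : (inner ℝ (ξ z) v : ℝ) ≤ N (z + v) - N z := by
    calc (inner ℝ (ξ z) v : ℝ) ≤ (N (z + v) - N z) / (1 - 0) := this
      _ = N (z + v) - N z := by norm_num
  linarith

lemma myN_inner_le (hNsmul : ∀ (a : ℝ) z, N (a • z) = |a| * N z)
    (hNadd : ∀ z₁ z₂, N (z₁ + z₂) ≤ N z₁ + N z₂)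
    (hξ : ∀ z, z ≠ 0 → HasGradientAt N (ξ z) z)
    {z : En n} (hz : z ≠ 0) (v : En n) :
    (inner ℝ (ξ z) v : ℝ) ≤ N v := by
  have h := myN_subgrad hNsmul hNadd hξ hz v
  have h2 := hNadd z v
  linarith

end Aux2

section Aux3
variable {n : ℕ} {N : En n → ℝ}

lemma myN_bound_above (hNsmul : ∀ (a : ℝ) z, N (a • z) = |a| * N z)
    (hNadd : ∀ z₁ z₂, N (z₁ + z₂) ≤ N z₁ + N z₂) :
    ∃ C : ℝ, 0 < C ∧ ∀ z, N z ≤ C * ‖z‖ := by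
  set b := EuclideanSpace.basisFun (Fin n) ℝ with hb
  have hsnn : (0:ℝ) ≤ ∑ i, N (b i) := Finset.sum_nonneg fun i _ => myN_nonneg hNsmul hNadd _
  refine ⟨(∑ i, N (b i)) + 1, by linarith, fun z => ?_⟩
  have hrepr : ∑ i, b.repr z i • b i = z := b.sum_repr z
  have hsum : N (∑ i, b.repr z i • b i) ≤ ∑ i, N (b.repr z i • b i) := by
    refine Finset.le_sum_of_subadditive N (myN_zero hNsmul).le hNadd _ _
  have hterm : ∀ i, N (b.repr z i • b i) ≤ N (b i) * ‖z‖ := by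
    intro i
    rw [hNsmul]
    have h1 : |b.repr z i| ≤ ‖z‖ := by
      have := b.repr_apply_apply z i
      rw [this]
      calc |(inner ℝ (b i) z : ℝ)| ≤ ‖b i‖ * ‖z‖ := abs_real_inner_le_norm _ _
        _ = ‖z‖ := by rw [b.orthonormal.1 i, one_mul]
    calc |b.repr z i| * N (b i) ≤ ‖z‖ * N (b i) := by
          exact mul_le_mul_of_nonneg_right h1 (myN_nonneg hNsmul hNadd _)
      _ = N (b i) * ‖z‖ := mul_comm _ _
  calc N z = N (∑ i, b.repr z i • b i) := by rw [hrepr]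
    _ ≤ ∑ i, N (b.repr z i • b i) := hsum
    _ ≤ ∑ i, N (b i) * ‖z‖ := Finset.sum_le_sum fun i _ => hterm i
    _ = (∑ i, N (b i)) * ‖z‖ := by rw [Finset.sum_mul]
    _ ≤ ((∑ i, N (b i)) + 1) * ‖z‖ := by
        have : (0:ℝ) ≤ ‖z‖ := norm_nonneg _
        nlinarith

lemma myN_lip (hNsmul : ∀ (a : ℝ) z, N (a • z) = |a| * N z)
    (hNadd : ∀ z₁ z₂, N (z₁ + z₂) ≤ N z₁ + N z₂) (a c : En n) :
    N a ≤ N c + N (a - c) := by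
  have := hNadd c (a - c)
  simpa using this

lemma myN_cont (hNsmul : ∀ (a : ℝ) z, N (a • z) = |a| * N z)
    (hNadd : ∀ z₁ z₂, N (z₁ + z₂) ≤ N z₁ + N z₂) : Continuous N := by
  obtain ⟨C, hC, hCle⟩ := myN_bound_above hNsmul hNadd
  rw [Metric.continuous_iff]
  intro a ε hε
  refine ⟨ε / C, by positivity, fun c hc => ?_⟩
  have h1 : N c ≤ N a + N (c - a) := myN_lip hNsmul hNadd c a
  have h2 : N a ≤ N c + N (a - c) := myN_lip hNsmul hNadd a c
  have h3 : N (c - a) ≤ C * ‖c - a‖ := hCle _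
  have h4 : N (a - c) ≤ C * ‖a - c‖ := hCle _
  have h5 : ‖c - a‖ < ε / C := by rwa [dist_eq_norm] at hc
  have h6 : ‖a - c‖ = ‖c - a‖ := norm_sub_rev _ _
  have h7 : C * ‖c - a‖ < ε := by
    have := (lt_div_iff₀' hC).mp h5
    linarith
  have : |N c - N a| < ε := by
    rw [abs_sub_lt_iff]
    constructor <;> nlinarith
  rwa [Real.dist_eq]

end Aux3

section Aux4
variable {n : ℕ} {N : En n → ℝ}

lemma myN_bound_below (hN0 : ∀ z, N z = 0 ↔ z = 0)
    (hNsmul : ∀ (a : ℝ) z, N (a • z) = |a| * N z)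
    (hNadd : ∀ z₁ z₂, N (z₁ + z₂) ≤ N z₁ + N z₂) :
    ∃ m : ℝ, 0 < m ∧ ∀ z, m * ‖z‖ ≤ N z := by
  by_cases hn : ∀ z : En n, z = 0
  · exact ⟨1, one_pos, fun z => by simp [hn z, myN_zero hNsmul]⟩
  push_neg at hn
  obtain ⟨z₀, hz₀⟩ := hn
  have hsph : (sphere (0 : En n) 1).Nonempty := ⟨‖z₀‖⁻¹ • z₀, by
    simp [norm_smul, norm_ne_zero_iff.2 hz₀, abs_of_nonneg, inv_mul_cancel₀ (norm_ne_zero_iff.2 hz₀)]⟩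
  obtain ⟨u, hu, hmin⟩ := (isCompact_sphere (0 : En n) 1).exists_isMinOn hsph
    (myN_cont hNsmul hNadd).continuousOn
  have hu1 : ‖u‖ = 1 := by simpa using hu
  have hupos : 0 < N u := by
    rcases lt_or_eq_of_le (myN_nonneg hNsmul hNadd u) with h | h
    · exact h
    · exfalso
      have : u = 0 := (hN0 u).1 h.symm
      rw [this] at hu1; simp at hu1
  refine ⟨N u, hupos, fun z => ?_⟩
  by_cases hz : z = 0
  · simp [hz, myN_zero hNsmul]
  · have hnz : ‖z‖ ≠ 0 := norm_ne_zero_iff.2 hz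
    have hmem : ‖z‖⁻¹ • z ∈ sphere (0 : En n) 1 := by
      simp [norm_smul, abs_of_nonneg, inv_mul_cancel₀ hnz]
    have h1 : N u ≤ N (‖z‖⁻¹ • z) := hmin hmem
    rw [hNsmul, abs_of_nonneg (by positivity)] at h1
    have hnorm : (0:ℝ) < ‖z‖ := lt_of_le_of_ne (norm_nonneg z) (Ne.symm hnz)
    rw [mul_comm]
    calc ‖z‖ * N u ≤ ‖z‖ * (‖z‖⁻¹ * N z) := by
          exact mul_le_mul_of_nonneg_left h1 (le_of_lt hnorm)
      _ = N z := by field_simp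

end Aux4

section Aux5
variable {n : ℕ} {N : En n → ℝ} {X : Set (En n)}

lemma myimg_ne (hne : X.Nonempty) (z : En n) : ((fun y => N (z - y)) '' X).Nonempty :=
  hne.image _

lemma myimg_bdd (hNsmul : ∀ (a : ℝ) z, N (a • z) = |a| * N z)
    (hNadd : ∀ z₁ z₂, N (z₁ + z₂) ≤ N z₁ + N z₂) (z : En n) :
    BddBelow ((fun y => N (z - y)) '' X) :=
  ⟨0, fun r ⟨y, _, hy⟩ => hy ▸ myN_nonneg hNsmul hNadd _⟩

lemma mydist_le (hNsmul : ∀ (a : ℝ) z, N (a • z) = |a| * N z)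
    (hNadd : ∀ z₁ z₂, N (z₁ + z₂) ≤ N z₁ + N z₂) (z : En n) {y : En n} (hy : y ∈ X) :
    distN N z X ≤ N (z - y) :=
  csInf_le (myimg_bdd hNsmul hNadd z) ⟨y, hy, rfl⟩

lemma mydist_lip (hNsmul : ∀ (a : ℝ) z, N (a • z) = |a| * N z)
    (hNadd : ∀ z₁ z₂, N (z₁ + z₂) ≤ N z₁ + N z₂) (hne : X.Nonempty) (a c : En n) :
    distN N a X ≤ distN N c X + N (a - c) := by
  have h : ∀ y ∈ X, distN N a X - N (a - c) ≤ N (c - y) := by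
    intro y hy
    have h1 : distN N a X ≤ N (a - y) := mydist_le hNsmul hNadd a hy
    have h2 : N (a - y) ≤ N (c - y) + N (a - c) := by
      have := hNadd (c - y) (a - c)
      have he : c - y + (a - c) = a - y := by abel
      rw [he] at this; linarith
    linarith
  have h3 : distN N a X - N (a - c) ≤ distN N c X := by
    refine le_csInf (myimg_ne (N := N) hne c) ?_
    rintro r ⟨y, hy, rfl⟩
    exact h y hy
  linarith

lemma mydist_cont (hNsmul : ∀ (a : ℝ) z, N (a • z) = |a| * N z)
    (hNadd : ∀ z₁ z₂, N (z₁ + z₂) ≤ N z₁ + N z₂) (hne : X.Nonempty) :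
    Continuous (fun z => distN N z X) := by
  obtain ⟨C, hC, hCle⟩ := myN_bound_above hNsmul hNadd
  rw [Metric.continuous_iff]
  intro a ε hε
  refine ⟨ε / C, by positivity, fun c hc => ?_⟩
  have h1 := mydist_lip hNsmul hNadd hne c a
  have h2 := mydist_lip hNsmul hNadd hne a c
  have h3 : N (c - a) ≤ C * ‖c - a‖ := hCle _
  have h4 : N (a - c) ≤ C * ‖a - c‖ := hCle _
  have h5 : ‖c - a‖ < ε / C := by rwa [dist_eq_norm] at hc
  have h6 : ‖a - c‖ = ‖c - a‖ := norm_sub_rev _ _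
  have h7 : C * ‖c - a‖ < ε := by
    have := (lt_div_iff₀' hC).mp h5
    linarith
  rw [Real.dist_eq, abs_sub_lt_iff]
  constructor <;> nlinarith

lemma myproj_nonempty (hN0 : ∀ z, N z = 0 ↔ z = 0)
    (hNsmul : ∀ (a : ℝ) z, N (a • z) = |a| * N z)
    (hNadd : ∀ z₁ z₂, N (z₁ + z₂) ≤ N z₁ + N z₂)
    (hX : IsClosed X) (hne : X.Nonempty) (z : En n) :
    (projN N X z).Nonempty := by
  obtain ⟨m, hm, hmle⟩ := myN_bound_below hN0 hNsmul hNadd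
  obtain ⟨r, ⟨y₁, hy₁, rfl⟩, hrlt⟩ := Real.lt_sInf_add_pos (myimg_ne (N := N) hne z) one_pos
  simp only at hrlt
  set R := (distN N z X + 1) / m with hR
  have hy₁K : y₁ ∈ X ∩ closedBall z R := by
    refine ⟨hy₁, ?_⟩
    rw [mem_closedBall, dist_comm, dist_eq_norm]
    have := hmle (z - y₁)
    rw [hR, le_div_iff₀ hm]
    unfold distN
    nlinarith
  have hK : IsCompact (X ∩ closedBall z R) := (isCompact_closedBall z R).inter_left hX
  obtain ⟨ystar, hystar, hmin⟩ := hK.exists_isMinOn ⟨y₁, hy₁K⟩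
    ((myN_cont hNsmul hNadd).comp (continuous_const.sub continuous_id)).continuousOn
  refine ⟨ystar, hystar.1, le_antisymm ?_ (mydist_le hNsmul hNadd z hystar.1)⟩
  -- N (z - ystar) ≤ distN N z X
  refine le_of_forall_pos_le_add fun ε hε => ?_
  obtain ⟨r', ⟨y₂, hy₂, rfl⟩, hr'lt⟩ :=
    Real.lt_sInf_add_pos (myimg_ne (N := N) hne z) (lt_min hε one_pos)
  simp only at hr'lt
  have hy₂K : y₂ ∈ X ∩ closedBall z R := by
    refine ⟨hy₂, ?_⟩
    rw [mem_closedBall, dist_comm, dist_eq_norm]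
    have := hmle (z - y₂)
    have hmin1 : min ε 1 ≤ 1 := min_le_right _ _
    rw [hR, le_div_iff₀ hm]
    unfold distN
    nlinarith
  have hh : N (z - ystar) ≤ N (z - y₂) := hmin hy₂K
  have hmin2 : min ε 1 ≤ ε := min_le_left _ _
  unfold distN
  linarith

end Aux5

section Aux6
variable {n : ℕ} {N : En n → ℝ} {ξ : En n → En n}

lemma myslope_tendsto (hξ : ∀ z, z ≠ 0 → HasGradientAt N (ξ z) z)
    {z : En n} (hz : z ≠ 0) (v : En n) :
    Tendsto (fun t : ℝ => (N (z + t • v) - N z) / t) (𝓝[>] (0:ℝ))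
      (𝓝 (inner ℝ (ξ z) v : ℝ)) := by
  have hd : HasDerivAt (fun t : ℝ => N (z + t • v)) (inner ℝ (ξ z) v : ℝ) 0 :=
    myN_line_deriv hξ hz v
  have h1 := hasDerivAt_iff_tendsto_slope.mp hd
  have h2 : Tendsto (slope (fun t : ℝ => N (z + t • v)) 0) (𝓝[>] (0:ℝ))
      (𝓝 (inner ℝ (ξ z) v : ℝ)) :=
    h1.mono_left (nhdsWithin_mono _ fun t ht => ne_of_gt ht)
  refine h2.congr fun t => ?_
  rw [slope_def_field]
  simp

end Aux6

/-- For a Fréchet smooth norm `‖·‖_* = N` with gradient `ξ` off the origin, a nonempty closed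
set `X`, and `x ∉ X`, the subderivative of `p = dist_*(·;X)` at `x` is
`d p(x)(w) = min{⟨ξ(x − y), w⟩ : y ∈ proj*_X(x)}`. -/
theorem stmt6 {n : ℕ} (N : En n → ℝ)
    (hN0 : ∀ z, N z = 0 ↔ z = 0)
    (hNsmul : ∀ (a : ℝ) z, N (a • z) = |a| * N z)
    (hNadd : ∀ z₁ z₂, N (z₁ + z₂) ≤ N z₁ + N z₂)
    (ξ : En n → En n) (hξ : ∀ z, z ≠ 0 → HasGradientAt N (ξ z) z)
    (X : Set (En n)) (hX : IsClosed X) (hne : X.Nonempty)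
    (x : En n) (hx : x ∉ X) :
    ∀ w, subderiv (fun z => distN N z X) x w =
      ((sInf ((fun y => (inner ℝ (ξ (x - y)) w : ℝ)) '' projN N X x) : ℝ) : EReal) := by
  intro w
  obtain ⟨m, hm, hmle⟩ := myN_bound_below hN0 hNsmul hNadd
  set p : En n → ℝ := fun z => distN N z X with hp
  set S := (fun y => (inner ℝ (ξ (x - y)) w : ℝ)) '' projN N X x with hS
  have hxyX : ∀ y ∈ X, x - y ≠ 0 := by
    intro y hy h
    exact hx (by rw [sub_eq_zero.mp h]; exact hy)
  have hprojne : (projN N X x).Nonempty := myproj_nonempty hN0 hNsmul hNadd hX hne x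
  have hSne : S.Nonempty := hprojne.image _
  have hSbdd : BddBelow S := by
    refine ⟨-(N w), ?_⟩
    rintro r ⟨y, hy, rfl⟩
    have h1 := myN_inner_le hNsmul hNadd hξ (hxyX y hy.1) (-w)
    rw [inner_neg_right, myN_neg hNsmul] at h1
    simp only
    linarith
  set c := sInf S with hc
  set F := ((𝓝[>] (0:ℝ)) ×ˢ (𝓝 w)) with hF
  set f : ℝ × En n → EReal :=
    fun q => (((p (x + q.1 • q.2) - p x) / q.1 : ℝ) : EReal) with hf
  have hsub : subderiv (fun z => distN N z X) x w = Filter.liminf f F := rfl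
  rw [hsub]
  -- Part B : upper bound
  have hub : ∀ d : ℝ, c < d → Filter.liminf f F ≤ (d : EReal) := by
    intro d hd
    obtain ⟨r, ⟨y, hy, rfl⟩, hrd⟩ := exists_lt_of_csInf_lt hSne hd
    simp only at hrd
    have hz : x - y ≠ 0 := hxyX y hy.1
    have htend := myslope_tendsto hξ hz w
    have hev : ∀ᶠ t in 𝓝[>] (0:ℝ),
        (N (x - y + t • w) - N (x - y)) / t < d := htend.eventually_lt_const hrd
    have hquot : ∀ t : ℝ, 0 < t →
        (p (x + t • w) - p x) / t ≤ (N (x - y + t • w) - N (x - y)) / t := by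
      intro t ht
      have h1 : p (x + t • w) ≤ N (x - y + t • w) := by
        have := mydist_le hNsmul hNadd (x + t • w) hy.1
        have he : x + t • w - y = x - y + t • w := by abel
        rw [he] at this
        exact this
      have h2 : p x = N (x - y) := hy.2.symm
      have h3 : p (x + t • w) - p x ≤ N (x - y + t • w) - N (x - y) := by linarith
      exact div_le_div_of_nonneg_right h3 ht.le |>.trans_eq rfl
    refine liminf_le_of_frequently_le' ?_
    rw [frequently_iff]
    intro U hU
    rcases Filter.mem_prod_iff.mp hU with ⟨A, hA, B, hB, hAB⟩
    have hmemE : {t : ℝ | (N (x - y + t • w) - N (x - y)) / t < d ∧ 0 < t} ∈ 𝓝[>] (0:ℝ) := by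
      refine inter_mem hev ?_
      exact self_mem_nhdsWithin
    obtain ⟨t, htA, htE⟩ := Filter.nonempty_of_mem (inter_mem hA hmemE)
    refine ⟨(t, w), hAB ⟨htA, mem_of_mem_nhds hB⟩, ?_⟩
    have hlt : (p (x + t • w) - p x) / t < d := lt_of_le_of_lt (hquot t htE.2) htE.1
    show (((p (x + t • w) - p x) / t : ℝ) : EReal) ≤ (d : EReal)
    exact EReal.coe_le_coe_iff.mpr hlt.le
  -- Part A : lower bound
  have hlb : ∀ d : ℝ, d < c → (d : EReal) ≤ Filter.liminf f F := by
    intro d hd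
    refine le_liminf_of_le (by isBoundedDefault) ?_
    by_contra hcon
    rw [not_eventually] at hcon
    have hfreq : ∃ᶠ q : ℝ × En n in F, (p (x + q.1 • q.2) - p x) / q.1 < d := by
      refine hcon.mono fun q hq => ?_
      have := not_le.mp hq
      exact_mod_cast EReal.coe_lt_coe_iff.mp this
    have hev1 : ∀ᶠ q : ℝ × En n in F, 0 < q.1 := by
      refine mem_of_superset (prod_mem_prod self_mem_nhdsWithin univ_mem) ?_
      rintro ⟨t, v⟩ ⟨ht, -⟩
      exact ht
    obtain ⟨seq, hseqt, hseqP⟩ := exists_seq_forall_of_frequently (hfreq.and_eventually hev1)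
    set t : ℕ → ℝ := fun k => (seq k).1 with hts
    set ws : ℕ → En n := fun k => (seq k).2 with hws
    have htt : Tendsto t atTop (𝓝[>] (0:ℝ)) := tendsto_fst.comp hseqt
    have hwt : Tendsto ws atTop (𝓝 w) := tendsto_snd.comp hseqt
    have htpos : ∀ k, 0 < t k := fun k => (hseqP k).2
    have hqlt : ∀ k, (p (x + t k • ws k) - p x) / t k < d := fun k => (hseqP k).1
    have ht0 : Tendsto t atTop (𝓝 0) := htt.mono_right nhdsWithin_le_nhds
    choose y' hy' using fun k => myproj_nonempty hN0 hNsmul hNadd hX hne (x + t k • ws k)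
    have hxk : Tendsto (fun k => x + t k • ws k) atTop (𝓝 x) := by
      have h1 : Tendsto (fun _ : ℕ => x) atTop (𝓝 x) := tendsto_const_nhds
      have := h1.add (ht0.smul hwt)
      simpa using this
    have hNcont := myN_cont hNsmul hNadd
    have hpcont := mydist_cont (X := X) hNsmul hNadd hne
    have hpk : Tendsto (fun k => p (x + t k • ws k)) atTop (𝓝 (p x)) :=
      (hpcont.tendsto x).comp hxk
    have hNk : ∀ k, N (x + t k • ws k - y' k) = p (x + t k • ws k) := fun k => (hy' k).2
    have htw0 : Tendsto (fun k => N (t k • ws k)) atTop (𝓝 0) := by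
      have h1 : Tendsto (fun k => t k • ws k) atTop (𝓝 0) := by
        have := ht0.smul hwt
        simpa using this
      have := (hNcont.tendsto 0).comp h1
      rwa [myN_zero hNsmul] at this
    -- bound on y'
    have haK : ∀ k, N (x - y' k) ≤ p (x + t k • ws k) + N (t k • ws k) := by
      intro k
      have h1 := myN_lip hNsmul hNadd (x - y' k) (x + t k • ws k - y' k)
      have he : x - y' k - (x + t k • ws k - y' k) = -(t k • ws k) := by abel
      rw [he, myN_neg hNsmul, hNk k] at h1
      exact h1
    obtain ⟨A, hA⟩ : ∃ A : ℝ, ∀ k, p (x + t k • ws k) + N (t k • ws k) ≤ A := by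
      have := (hpk.add htw0).bddAbove_range
      obtain ⟨A, hA⟩ := this
      exact ⟨A, fun k => hA ⟨k, rfl⟩⟩
    have hbnd : ∀ k, y' k ∈ closedBall (0 : En n) (‖x‖ + A / m) := by
      intro k
      rw [mem_closedBall, dist_zero_right]
      have h1 : m * ‖x - y' k‖ ≤ A := le_trans (hmle _) (le_trans (haK k) (hA k))
      have h2 : ‖x - y' k‖ ≤ A / m := (le_div_iff₀' hm).mpr h1
      have h3 : ‖y' k‖ ≤ ‖x - y' k‖ + ‖x‖ := by
        have := norm_sub_le (x - y' k) x
        simpa using this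
      linarith
    obtain ⟨y, _, φ, hφ, hyt⟩ := tendsto_subseq_of_bounded isBounded_closedBall hbnd
    have hφt : Tendsto φ atTop atTop := hφ.tendsto_atTop
    have hyX : y ∈ X := hX.mem_of_tendsto hyt (Eventually.of_forall fun k => (hy' (φ k)).1)
    -- N (x - y) = p x
    have hNyk : Tendsto (fun k => N (x - y' (φ k))) atTop (𝓝 (p x)) := by
      have hup : ∀ k, N (x - y' (φ k)) ≤ p (x + t (φ k) • ws (φ k)) + N (t (φ k) • ws (φ k)) :=
        fun k => haK (φ k)
      have hlo : ∀ k, p (x + t (φ k) • ws (φ k)) - N (t (φ k) • ws (φ k)) ≤ N (x - y' (φ k)) := by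
        intro k
        have h1 := myN_lip hNsmul hNadd (x + t (φ k) • ws (φ k) - y' (φ k)) (x - y' (φ k))
        have he : x + t (φ k) • ws (φ k) - y' (φ k) - (x - y' (φ k)) = t (φ k) • ws (φ k) := by
          abel
        rw [he, hNk (φ k)] at h1
        linarith
      have hu : Tendsto (fun k => p (x + t (φ k) • ws (φ k)) + N (t (φ k) • ws (φ k))) atTop
          (𝓝 (p x)) := by
        have := (hpk.add htw0).comp hφt
        rwa [add_zero] at this
      have hl : Tendsto (fun k => p (x + t (φ k) • ws (φ k)) - N (t (φ k) • ws (φ k))) atTop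
          (𝓝 (p x)) := by
        have := (hpk.sub htw0).comp hφt
        rwa [sub_zero] at this
      exact tendsto_of_tendsto_of_tendsto_of_le_of_le hl hu hlo hup
    have hNy : N (x - y) = p x := by
      have h1 : Tendsto (fun k => N (x - y' (φ k))) atTop (𝓝 (N (x - y))) :=
        (hNcont.tendsto _).comp (tendsto_const_nhds.sub hyt)
      exact tendsto_nhds_unique h1 hNyk
    have hyproj : y ∈ projN N X x := ⟨hyX, hNy⟩
    have hzy : x - y ≠ 0 := hxyX y hyX
    -- inner products bounded by d
    have hek : ∀ k, (inner ℝ (ξ (x - y' k)) (ws k) : ℝ) < d := by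
      intro k
      have hzk : x - y' k ≠ 0 := hxyX (y' k) (hy' k).1
      have hsg := myN_subgrad hNsmul hNadd hξ hzk (t k • ws k)
      rw [inner_smul_right] at hsg
      have he : x - y' k + t k • ws k = x + t k • ws k - y' k := by abel
      rw [he, hNk k] at hsg
      have hpxle : p x ≤ N (x - y' k) := mydist_le hNsmul hNadd x (hy' k).1
      have h2 : t k * (inner ℝ (ξ (x - y' k)) (ws k) : ℝ) ≤ p (x + t k • ws k) - p x := by
        linarith
      have h3 := hqlt k
      rw [div_lt_iff₀ (htpos k)] at h3
      nlinarith [htpos k]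
    -- limit bound for each s > 0
    have hBs : ∀ s : ℝ, 0 < s → (N (x - y) - N (x - y - s • w)) / s ≤ d := by
      intro s hs
      have hterm : ∀ k, (N (x - y' (φ k)) - N (x - y' (φ k) - s • ws (φ k))) / s ≤ d := by
        intro k
        have hzk : x - y' (φ k) ≠ 0 := hxyX (y' (φ k)) (hy' (φ k)).1
        have hsg := myN_subgrad hNsmul hNadd hξ hzk (-(s • ws (φ k)))
        rw [inner_neg_right, inner_smul_right] at hsg
        have he : x - y' (φ k) + -(s • ws (φ k)) = x - y' (φ k) - s • ws (φ k) := by abel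
        rw [he] at hsg
        have h1 : (N (x - y' (φ k)) - N (x - y' (φ k) - s • ws (φ k))) / s ≤
            (inner ℝ (ξ (x - y' (φ k))) (ws (φ k)) : ℝ) := by
          rw [div_le_iff₀ hs]
          nlinarith
        exact le_trans h1 (le_of_lt (hek (φ k)))
      have htendB : Tendsto (fun k => (N (x - y' (φ k)) - N (x - y' (φ k) - s • ws (φ k))) / s)
          atTop (𝓝 ((N (x - y) - N (x - y - s • w)) / s)) := by
        have hy'φ : Tendsto (fun k => y' (φ k)) atTop (𝓝 y) := hyt
        have hwφ : Tendsto (fun k => ws (φ k)) atTop (𝓝 w) := hwt.comp hφt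
        have h1 : Tendsto (fun k => x - y' (φ k)) atTop (𝓝 (x - y)) :=
          tendsto_const_nhds.sub hy'φ
        have h2 : Tendsto (fun k => x - y' (φ k) - s • ws (φ k)) atTop (𝓝 (x - y - s • w)) :=
          h1.sub (tendsto_const_nhds.smul hwφ)
        exact (((hNcont.tendsto _).comp h1).sub ((hNcont.tendsto _).comp h2)).div_const s
      exact le_of_tendsto htendB (Eventually.of_forall hterm)
    have hBtend : Tendsto (fun s : ℝ => (N (x - y) - N (x - y - s • w)) / s) (𝓝[>] (0:ℝ))
        (𝓝 (inner ℝ (ξ (x - y)) w : ℝ)) := by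
      have h1 := myslope_tendsto hξ hzy (-w)
      rw [inner_neg_right] at h1
      have h2 := h1.neg
      rw [neg_neg] at h2
      refine h2.congr fun s => ?_
      rw [smul_neg]
      rw [show x - y + -(s • w) = x - y - s • w by abel]
      ring
    have hinle : (inner ℝ (ξ (x - y)) w : ℝ) ≤ d := by
      refine le_of_tendsto hBtend ?_
      filter_upwards [self_mem_nhdsWithin] with s hs
      exact hBs s hs
    have hcle : c ≤ (inner ℝ (ξ (x - y)) w : ℝ) := csInf_le hSbdd ⟨y, hyproj, rfl⟩
    linarith
  -- combine
  refine le_antisymm ?_ ?_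
  · by_contra h
    push_neg at h
    obtain ⟨d, hcd, hdL⟩ := EReal.exists_between_coe_real h
    exact absurd (hub d (EReal.coe_lt_coe_iff.mp hcd)) (not_le.mpr hdL)
  · by_contra h
    push_neg at h
    obtain ⟨d, hLd, hdc⟩ := EReal.exists_between_coe_real h
    exact absurd (hlb d (EReal.coe_lt_coe_iff.mp hdc)) (not_le.mpr hLd)
end

section
/- Let ‖·‖_* be a norm on ℝⁿ that is Fréchet differentiable on ℝⁿ∖{0}, X ⊆ ℝⁿ nonempty closed, and p(x) := dist_*(x; X). Then p is semi-differentiable at every point x ∉ X; that is, for every w ∈ ℝⁿ the full limit lim_{t↓0, w'→w} (p(x+tw') − p(x))/t exists. -/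
open Filter Topology Metric Set

lemma aux_zero {n : ℕ} {N : En n → ℝ} (hN0 : ∀ z, N z = 0 ↔ z = 0) : N 0 = 0 := (hN0 0).2 rfl

lemma aux_neg {n : ℕ} {N : En n → ℝ} (hNsmul : ∀ (a : ℝ) z, N (a • z) = |a| * N z)
    (z : En n) : N (-z) = N z := by
  have := hNsmul (-1) z; simpa using this

lemma aux_nonneg {n : ℕ} {N : En n → ℝ} (hN0 : ∀ z, N z = 0 ↔ z = 0)
    (hNsmul : ∀ (a : ℝ) z, N (a • z) = |a| * N z)
    (hNadd : ∀ z₁ z₂, N (z₁ + z₂) ≤ N z₁ + N z₂) (z : En n) : 0 ≤ N z := by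
  have h := hNadd z (-z)
  rw [add_neg_cancel, aux_zero hN0, aux_neg hNsmul] at h
  linarith

lemma aux_coord_le {n : ℕ} (z : En n) (i : Fin n) : |z i| ≤ ‖z‖ := by
  rw [EuclideanSpace.norm_eq]
  have h1 : |z i| = Real.sqrt (‖z i‖ ^ 2) := by
    rw [Real.sqrt_sq_eq_abs]; simp
  rw [h1]
  apply Real.sqrt_le_sqrt
  exact Finset.single_le_sum (f := fun j => ‖z j‖ ^ 2) (fun j _ => sq_nonneg _) (Finset.mem_univ i)

lemma aux_decomp {n : ℕ} (z : En n) : z = ∑ i, EuclideanSpace.single i (z i) := by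
  ext j
  rw [WithLp.ofLp_sum, Finset.sum_apply]
  simp [EuclideanSpace.single_apply]

lemma aux_sum_le {n : ℕ} {N : En n → ℝ} (hN0 : ∀ z, N z = 0 ↔ z = 0)
    (hNadd : ∀ z₁ z₂, N (z₁ + z₂) ≤ N z₁ + N z₂) :
    ∀ (s : Finset (Fin n)) (f : Fin n → En n), N (∑ i ∈ s, f i) ≤ ∑ i ∈ s, N (f i) := by
  intro s
  induction s using Finset.cons_induction with
  | empty => intro f; simp [aux_zero hN0]
  | cons a s ha ih =>
    intro f
    rw [Finset.sum_cons, Finset.sum_cons]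
    exact le_trans (hNadd _ _) (by linarith [ih f])

lemma aux_upper {n : ℕ} {N : En n → ℝ} (hN0 : ∀ z, N z = 0 ↔ z = 0)
    (hNsmul : ∀ (a : ℝ) z, N (a • z) = |a| * N z)
    (hNadd : ∀ z₁ z₂, N (z₁ + z₂) ≤ N z₁ + N z₂) :
    ∃ C > 0, ∀ z : En n, N z ≤ C * ‖z‖ := by
  refine ⟨(∑ i, N (EuclideanSpace.single i (1:ℝ))) + 1, ?_, ?_⟩
  · have : 0 ≤ ∑ i, N (EuclideanSpace.single i (1:ℝ)) :=
      Finset.sum_nonneg fun i _ => aux_nonneg hN0 hNsmul hNadd _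
    linarith
  · intro z
    calc N z = N (∑ i, EuclideanSpace.single i (z i)) := by rw [← aux_decomp]
    _ ≤ ∑ i, N (EuclideanSpace.single i (z i)) := aux_sum_le hN0 hNadd _ _
    _ ≤ ∑ i, N (EuclideanSpace.single i (1:ℝ)) * ‖z‖ := by
        apply Finset.sum_le_sum
        intro i _
        have h1 : EuclideanSpace.single i (z i) = (z i) • EuclideanSpace.single i (1:ℝ) := by
          ext j; simp [EuclideanSpace.single_apply]
        rw [h1, hNsmul]
        have h2 := aux_coord_le z i
        have h3 := aux_nonneg hN0 hNsmul hNadd (EuclideanSpace.single i (1:ℝ))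
        have h4 := abs_nonneg (z i)
        nlinarith
    _ ≤ _ := by
        rw [← Finset.sum_mul]
        have : 0 ≤ ‖z‖ := norm_nonneg z
        nlinarith [Finset.sum_nonneg (fun i (_ : i ∈ Finset.univ) => aux_nonneg hN0 hNsmul hNadd (EuclideanSpace.single i (1:ℝ)))]

lemma aux_cont {n : ℕ} {N : En n → ℝ} {C : ℝ}
    (hNsmul : ∀ (a : ℝ) z, N (a • z) = |a| * N z)
    (hNadd : ∀ z₁ z₂, N (z₁ + z₂) ≤ N z₁ + N z₂)
    (hC : ∀ z, N z ≤ C * ‖z‖) : Continuous N := by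
  have key : ∀ a b : En n, N a - N b ≤ C * ‖a - b‖ := by
    intro a b
    have h1 : N a ≤ N b + N (a - b) := by
      have := hNadd b (a - b); simpa using this
    linarith [hC (a - b)]
  have : LipschitzWith (Real.toNNReal C) N := by
    apply LipschitzWith.of_dist_le_mul
    intro a b
    rw [Real.dist_eq, dist_eq_norm]
    have h2 := key a b
    have h3 := key b a
    have h4 : ‖b - a‖ = ‖a - b‖ := by rw [← neg_sub, norm_neg]
    rw [h4] at h3
    have h5 : C * ‖a - b‖ ≤ Real.toNNReal C * ‖a - b‖ := by
      apply mul_le_mul_of_nonneg_right (Real.le_coe_toNNReal C) (norm_nonneg _)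
    rw [abs_sub_le_iff]
    constructor <;> linarith
  exact this.continuous

lemma aux_lower {n : ℕ} {N : En n → ℝ} [Nontrivial (En n)]
    (hN0 : ∀ z, N z = 0 ↔ z = 0)
    (hNsmul : ∀ (a : ℝ) z, N (a • z) = |a| * N z)
    (hNadd : ∀ z₁ z₂, N (z₁ + z₂) ≤ N z₁ + N z₂)
    (hNcont : Continuous N) :
    ∃ c > 0, ∀ z : En n, c * ‖z‖ ≤ N z := by
  have hsph : (sphere (0 : En n) 1).Nonempty := NormedSpace.sphere_nonempty.2 zero_le_one
  obtain ⟨z₀, hz₀mem, hz₀min⟩ := (isCompact_sphere (0 : En n) 1).exists_isMinOn hsph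
    hNcont.continuousOn
  have hz₀norm : ‖z₀‖ = 1 := by simpa using hz₀mem
  have hz₀ne : z₀ ≠ 0 := by intro h; rw [h] at hz₀norm; simp at hz₀norm
  have hnn : (0:ℝ) ≤ N z₀ := by
    have h := hNadd z₀ (-z₀)
    have h2 := hNsmul (-1) z₀
    simp at h2
    rw [add_neg_cancel, (hN0 0).2 rfl, h2] at h
    linarith
  have hc0 : 0 < N z₀ := by
    rcases lt_or_eq_of_le hnn with h | h
    · exact h
    · exact absurd ((hN0 z₀).1 h.symm) hz₀ne
  refine ⟨N z₀, hc0, ?_⟩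
  intro z
  rcases eq_or_ne z 0 with rfl | hz
  · simp [(hN0 0).2 rfl]
  · have hnz : ‖z‖ ≠ 0 := norm_ne_zero_iff.2 hz
    have hmem : ‖z‖⁻¹ • z ∈ sphere (0 : En n) 1 := by
      simp [norm_smul, abs_of_nonneg (inv_nonneg.2 (norm_nonneg z)), inv_mul_cancel₀ hnz]
    have hmin := hz₀min hmem
    simp only [Set.mem_setOf_eq] at hmin
    have : N (‖z‖⁻¹ • z) = ‖z‖⁻¹ * N z := by
      rw [hNsmul, abs_of_nonneg (inv_nonneg.2 (norm_nonneg z))]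
    rw [this] at hmin
    have hpos : 0 < ‖z‖ := norm_pos_iff.2 hz
    calc N z₀ * ‖z‖ ≤ (‖z‖⁻¹ * N z) * ‖z‖ := by nlinarith
    _ = N z := by field_simp

lemma aux_distN_le {n : ℕ} {N : En n → ℝ} {X : Set (En n)}
    (hnn : ∀ z, 0 ≤ N z) {v y : En n} (hy : y ∈ X) :
    distN N v X ≤ N (v - y) :=
  csInf_le ⟨0, fun _ ⟨_, _, e⟩ => e ▸ hnn _⟩ ⟨y, hy, rfl⟩

lemma aux_nearest {n : ℕ} {N : En n → ℝ} {X : Set (En n)} {c : ℝ}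
    (hnn : ∀ z, 0 ≤ N z) (hc0 : 0 < c) (hc : ∀ z, c * ‖z‖ ≤ N z)
    (hNcont : Continuous N) (hX : IsClosed X) (hne : X.Nonempty) (v : En n) :
    ∃ y ∈ X, N (v - y) = distN N v X := by
  obtain ⟨y₀, hy₀⟩ := hne
  set R := N (v - y₀) / c with hR
  set K := X ∩ closedBall v R with hK
  have hy₀K : y₀ ∈ K := by
    refine ⟨hy₀, ?_⟩
    rw [mem_closedBall, dist_comm, dist_eq_norm]
    rw [hR, le_div_iff₀ hc0]
    linarith [hc (v - y₀)]
  have hKcpt : IsCompact K := (isCompact_closedBall v R).inter_left hX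
  obtain ⟨y₁, hy₁K, hy₁min⟩ := hKcpt.exists_isMinOn ⟨y₀, hy₀K⟩
    ((hNcont.comp (continuous_const.sub continuous_id)).continuousOn)
  refine ⟨y₁, hy₁K.1, ?_⟩
  have hmin : ∀ y ∈ X, N (v - y₁) ≤ N (v - y) := by
    intro y hy
    by_cases hyK : y ∈ closedBall v R
    · exact hy₁min ⟨hy, hyK⟩
    · have h1 : R < ‖v - y‖ := by
        rw [mem_closedBall, dist_comm, dist_eq_norm] at hyK
        linarith [not_le.1 hyK]
      have h2 : N (v - y₀) < N (v - y) := by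
        have h3 := hc (v - y)
        have : c * R < c * ‖v - y‖ := by nlinarith
        rw [hR] at this
        rw [mul_div_cancel₀ _ (ne_of_gt hc0)] at this
        linarith
      have h4 : N (v - y₁) ≤ N (v - y₀) := hy₁min hy₀K
      linarith
  apply le_antisymm
  · exact le_csInf ⟨N (v - y₀), y₀, hy₀, rfl⟩ (fun r ⟨y, hy, e⟩ => e ▸ hmin y hy)
  · exact aux_distN_le hnn hy₁K.1

lemma aux_dirderiv {n : ℕ} {N : En n → ℝ}
    (hNdiff : ∀ z, z ≠ 0 → DifferentiableAt ℝ N z) {z : En n} (hz : z ≠ 0) (v : En n) :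
    HasDerivAt (fun t : ℝ => N (z + t • v)) (fderiv ℝ N z v) 0 := by
  have h1 : HasDerivAt (fun t : ℝ => z + t • v) v 0 := by
    simpa using ((hasDerivAt_id (0:ℝ)).smul_const v).const_add z
  have h2 : HasFDerivAt N (fderiv ℝ N z) ((fun t : ℝ => z + t • v) 0) := by
    simpa using (hNdiff z hz).hasFDerivAt
  exact h2.comp_hasDerivAt 0 h1

lemma aux_subgrad {n : ℕ} {N : En n → ℝ}
    (hN0 : ∀ z, N z = 0 ↔ z = 0)
    (hNsmul : ∀ (a : ℝ) z, N (a • z) = |a| * N z)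
    (hNadd : ∀ z₁ z₂, N (z₁ + z₂) ≤ N z₁ + N z₂)
    (hNdiff : ∀ z, z ≠ 0 → DifferentiableAt ℝ N z) {z : En n} (hz : z ≠ 0) (v : En n) :
    fderiv ℝ N z v ≤ N (z + v) - N z := by
  have hd := aux_dirderiv hNdiff hz v
  rw [hasDerivAt_iff_tendsto_slope] at hd
  have hd' : Tendsto (slope (fun t : ℝ => N (z + t • v)) 0) (𝓝[>] 0)
      (𝓝 (fderiv ℝ N z v)) := hd.mono_left (nhdsWithin_mono _ (fun t ht => ne_of_gt ht))
  refine le_of_tendsto hd' ?_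
  filter_upwards [Ioc_mem_nhdsGT_of_mem (Set.mem_Ico.2 ⟨le_refl (0:ℝ), zero_lt_one⟩)] with t ht
  obtain ⟨ht0, ht1⟩ := ht
  have hconv : N (z + t • v) ≤ N z + t * (N (z + v) - N z) := by
    have hdecomp : z + t • v = (1 - t) • z + t • (z + v) := by
      rw [smul_add]; module
    rw [hdecomp]
    calc N ((1 - t) • z + t • (z + v)) ≤ N ((1 - t) • z) + N (t • (z + v)) := hNadd _ _
    _ = (1 - t) * N z + t * N (z + v) := by
        rw [hNsmul, hNsmul, abs_of_nonneg (by linarith), abs_of_nonneg (le_of_lt ht0)]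
    _ = N z + t * (N (z + v) - N z) := by ring
  rw [slope_def_field]
  simp only [sub_zero, zero_smul, add_zero]
  rw [div_le_iff₀ ht0]
  nlinarith

lemma aux_subgrad_lower {n : ℕ} {N : En n → ℝ}
    (hN0 : ∀ z, N z = 0 ↔ z = 0)
    (hNsmul : ∀ (a : ℝ) z, N (a • z) = |a| * N z)
    (hNadd : ∀ z₁ z₂, N (z₁ + z₂) ≤ N z₁ + N z₂)
    (hNdiff : ∀ z, z ≠ 0 → DifferentiableAt ℝ N z) {z : En n} (hz : z ≠ 0) (v : En n) :
    N z - N (z - v) ≤ fderiv ℝ N z v := by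
  have h := aux_subgrad hN0 hNsmul hNadd hNdiff hz (-v)
  rw [map_neg] at h
  have : z + -v = z - v := by abel
  rw [this] at h
  linarith

lemma aux_slope_mono {n : ℕ} {N : En n → ℝ}
    (hNsmul : ∀ (a : ℝ) z, N (a • z) = |a| * N z)
    (hNadd : ∀ z₁ z₂, N (z₁ + z₂) ≤ N z₁ + N z₂)
    (z v : En n) {t s : ℝ} (ht : 0 < t) (hts : t ≤ s) :
    (N z - N (z - s • v)) / s ≤ (N z - N (z - t • v)) / t := by
  have hs : 0 < s := lt_of_lt_of_le ht hts
  have hsne : s ≠ 0 := ne_of_gt hs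
  have hdecomp : z - t • v = (1 - t/s) • z + (t/s) • (z - s • v) := by
    have h1 : (t/s) • (s • v) = t • v := by
      rw [smul_smul, div_mul_cancel₀ _ hsne]
    rw [smul_sub, h1]
    module
  have hconv : N (z - t • v) ≤ (1 - t/s) * N z + (t/s) * N (z - s • v) := by
    rw [hdecomp]
    calc N ((1 - t/s) • z + (t/s) • (z - s • v))
        ≤ N ((1 - t/s) • z) + N ((t/s) • (z - s • v)) := hNadd _ _
    _ = (1 - t/s) * N z + (t/s) * N (z - s • v) := by
        rw [hNsmul, hNsmul, abs_of_nonneg, abs_of_nonneg]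
        · positivity
        · have : t/s ≤ 1 := (div_le_one hs).2 hts
          linarith
  have hmul := mul_le_mul_of_nonneg_left hconv hs.le
  rw [div_le_div_iff₀ hs ht]
  have hexp : s * ((1 - t/s) * N z + (t/s) * N (z - s • v))
      = (s - t) * N z + t * N (z - s • v) := by
    field_simp
  rw [hexp] at hmul
  nlinarith

lemma aux_dir_limit {n : ℕ} {N : En n → ℝ}
    (hNdiff : ∀ z, z ≠ 0 → DifferentiableAt ℝ N z) {z : En n} (hz : z ≠ 0)
    {t : ℕ → ℝ} {w' : ℕ → En n} {w : En n}
    (ht : Tendsto t atTop (𝓝[>] 0)) (hw : Tendsto w' atTop (𝓝 w)) :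
    Tendsto (fun k => (t k)⁻¹ * (N (z + t k • w' k) - N z)) atTop
      (𝓝 (fderiv ℝ N z w)) := by
  set f' := fderiv ℝ N z with hf'
  have hlo := hasFDerivAt_iff_isLittleO_nhds_zero.1 (hNdiff z hz).hasFDerivAt
  have ht0 : Tendsto t atTop (𝓝 0) := ht.mono_right nhdsWithin_le_nhds
  have htpos : ∀ᶠ k in atTop, 0 < t k := ht.eventually eventually_mem_nhdsWithin
  have hu : Tendsto (fun k => t k • w' k) atTop (𝓝 0) := by
    have := ht0.smul hw
    simpa using this
  have hfw : Tendsto (fun k => f' (w' k)) atTop (𝓝 (f' w)) :=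
    (f'.continuous.tendsto w).comp hw
  have hd : Tendsto (fun k => (t k)⁻¹ * (N (z + t k • w' k) - N z) - f' (w' k)) atTop (𝓝 0) := by
    rw [NormedAddCommGroup.tendsto_nhds_zero]
    intro ε hε
    set M := ‖w‖ + 1 with hM
    have hM0 : 0 < M := by positivity
    have hδ : 0 < ε / (2 * M) := by positivity
    have hev1 : ∀ᶠ u in 𝓝 (0 : En n), ‖N (z + u) - N z - f' u‖ ≤ ε / (2 * M) * ‖u‖ :=
      hlo.def hδ
    have hev2 := hu.eventually hev1
    have hev3 : ∀ᶠ k in atTop, ‖w' k‖ < M := by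
      apply (hw.norm).eventually_lt_const
      linarith
    filter_upwards [hev2, hev3, htpos] with k h2 h3 h4
    have htne : t k ≠ 0 := ne_of_gt h4
    have key : (t k)⁻¹ * (N (z + t k • w' k) - N z) - f' (w' k)
        = (t k)⁻¹ * (N (z + t k • w' k) - N z - f' (t k • w' k)) := by
      rw [map_smul, smul_eq_mul]
      field_simp
    rw [key, norm_mul, norm_inv, Real.norm_eq_abs, abs_of_pos h4]
    have h5 : ‖t k • w' k‖ = t k * ‖w' k‖ := by
      rw [norm_smul, Real.norm_eq_abs, abs_of_pos h4]
    calc (t k)⁻¹ * ‖N (z + t k • w' k) - N z - f' (t k • w' k)‖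
        ≤ (t k)⁻¹ * (ε / (2 * M) * (t k * ‖w' k‖)) := by
          rw [← h5]
          exact mul_le_mul_of_nonneg_left h2 (inv_nonneg.2 (le_of_lt h4))
    _ = ε / (2 * M) * ‖w' k‖ := by field_simp
    _ ≤ ε / (2 * M) * M := by nlinarith [norm_nonneg (w' k)]
    _ < ε := by rw [div_mul_eq_mul_div, mul_comm]; rw [div_lt_iff₀ (by positivity)]; nlinarith
  have := hd.add hfw
  simp only [zero_add] at this
  convert this using 2 with k
  ring

/-- For a norm `N = ‖·‖_*` on `ℝⁿ` that is Fréchet differentiable away from `0` and a nonempty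
closed set `X`, the distance function `p = dist_*(·;X)` is semi-differentiable at every
`x ∉ X`. -/
theorem stmt7 {n : ℕ} (N : En n → ℝ)
    (hN0 : ∀ z, N z = 0 ↔ z = 0)
    (hNsmul : ∀ (a : ℝ) z, N (a • z) = |a| * N z)
    (hNadd : ∀ z₁ z₂, N (z₁ + z₂) ≤ N z₁ + N z₂)
    (hNdiff : ∀ z, z ≠ 0 → DifferentiableAt ℝ N z)
    (X : Set (En n)) (hX : IsClosed X) (hne : X.Nonempty)
    (x : En n) (hx : x ∉ X) :
    ∃ g : En n → ℝ, HasSemiDerivAt (fun z => distN N z X) x g := by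
  rcases subsingleton_or_nontrivial (En n) with hsub | hnontriv
  · obtain ⟨y₀, hy₀⟩ := hne
    exact absurd ((Subsingleton.elim x y₀) ▸ hy₀) hx
  have hnn : ∀ z, 0 ≤ N z := aux_nonneg hN0 hNsmul hNadd
  obtain ⟨C, hC0, hC⟩ := aux_upper hN0 hNsmul hNadd
  have hNcont : Continuous N := aux_cont hNsmul hNadd hC
  obtain ⟨c, hc0, hc⟩ := aux_lower hN0 hNsmul hNadd hNcont
  set p : En n → ℝ := fun v => distN N v X with hp
  have hple : ∀ v, ∀ y ∈ X, p v ≤ N (v - y) := fun v y hy => aux_distN_le hnn hy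
  have hnear : ∀ v, ∃ y ∈ X, N (v - y) = p v := fun v => aux_nearest hnn hc0 hc hNcont hX hne v
  have hplip : ∀ a b : En n, p a ≤ p b + N (a - b) := by
    intro a b
    obtain ⟨y, hyX, hyb⟩ := hnear b
    have h1 : p a ≤ N (a - y) := hple a y hyX
    have h2 : N (a - y) ≤ N (b - y) + N (a - b) := by
      have h := hNadd (a - b) (b - y)
      have h3 : (a - b) + (b - y) = a - y := by abel
      rw [h3] at h; linarith
    rw [← hyb]; linarith
  have hppos : ∀ v, v ∉ X → 0 < p v := by
    intro v hv
    obtain ⟨y, hyX, hyv⟩ := hnear v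
    rw [← hyv]
    rcases lt_or_eq_of_le (hnn (v - y)) with h | h
    · exact h
    · exfalso
      have h1 := (hN0 _).1 h.symm
      rw [sub_eq_zero] at h1
      exact hv (h1 ▸ hyX)
  set P : Set (En n) := {y | y ∈ X ∧ N (x - y) = p x} with hP
  obtain ⟨ym, hymX, hym⟩ := hnear x
  have hPne : P.Nonempty := ⟨ym, hymX, hym⟩
  have hPz : ∀ y ∈ P, x - y ≠ 0 := by
    intro y hy h
    rw [sub_eq_zero] at h
    exact hx (h ▸ hy.1)
  set g : En n → ℝ := fun w => sInf ((fun y => fderiv ℝ N (x - y) w) '' P) with hg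
  have hSbdd : ∀ w : En n, ∀ r ∈ (fun y => fderiv ℝ N (x - y) w) '' P, -(N w) ≤ r := by
    rintro w r ⟨y, hyP, rfl⟩
    have hz := hPz y hyP
    have h1 := aux_subgrad_lower hN0 hNsmul hNadd hNdiff hz w
    have h2 : N (x - y - w) ≤ N (x - y) + N w := by
      have h := hNadd (x - y) (-w)
      have h3 : (x - y) + (-w) = x - y - w := by abel
      rw [h3, aux_neg hNsmul] at h; linarith
    simp only at h1 ⊢
    linarith
  refine ⟨g, ?_⟩
  intro w
  have hgS : ((fun y => fderiv ℝ N (x - y) w) '' P).Nonempty := hPne.image _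
  have hbdd : BddBelow ((fun y => fderiv ℝ N (x - y) w) '' P) :=
    ⟨-(N w), fun r hr => hSbdd w r hr⟩
  rw [tendsto_iff_seq_tendsto]
  intro u hu
  simp only [Function.comp_def]
  set t : ℕ → ℝ := fun k => (u k).1 with htdef
  set ws : ℕ → En n := fun k => (u k).2 with hwsdef
  have ht : Tendsto t atTop (𝓝[>] 0) := tendsto_fst.comp hu
  have hws : Tendsto ws atTop (𝓝 w) := tendsto_snd.comp hu
  have ht0 : Tendsto t atTop (𝓝 0) := ht.mono_right nhdsWithin_le_nhds
  have htpos : ∀ᶠ k in atTop, 0 < t k := ht.eventually eventually_mem_nhdsWithin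
  rw [tendsto_order]
  constructor
  · -- lower bound
    intro a ha
    by_contra hcon
    rw [Filter.not_eventually] at hcon
    obtain ⟨φ, hφmono, hφ⟩ := extraction_of_frequently_atTop hcon
    simp only [not_lt] at hφ
    -- subsequence data
    have hφat : Tendsto φ atTop atTop := hφmono.tendsto_atTop
    set t' : ℕ → ℝ := t ∘ φ with ht'def
    set ws' : ℕ → En n := ws ∘ φ with hws'def
    have ht' : Tendsto t' atTop (𝓝[>] 0) := ht.comp hφat
    have hws' : Tendsto ws' atTop (𝓝 w) := hws.comp hφat
    have ht0' : Tendsto t' atTop (𝓝 0) := ht'.mono_right nhdsWithin_le_nhds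
    set xk : ℕ → En n := fun k => x + t' k • ws' k with hxkdef
    have hxk : Tendsto xk atTop (𝓝 x) := by
      have h1 : Tendsto (fun k => t' k • ws' k) atTop (𝓝 0) := by
        have := ht0'.smul hws'; simpa using this
      have := tendsto_const_nhds.add h1 (f := fun _ : ℕ => x) (x := atTop)
      simpa using this
    have hpxk : Tendsto (fun k => p (xk k)) atTop (𝓝 (p x)) := by
      have hub : ∀ k, p (xk k) ≤ p x + N (xk k - x) := fun k => hplip (xk k) x
      have hlb : ∀ k, p x - N (x - xk k) ≤ p (xk k) := by
        intro k
        have := hplip x (xk k)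
        linarith
      have hN1 : Tendsto (fun k => N (xk k - x)) atTop (𝓝 0) := by
        have h1 : Tendsto (fun k => xk k - x) atTop (𝓝 0) := by
          have := hxk.sub (tendsto_const_nhds (x := x) (f := atTop)); simpa using this
        have := (hNcont.tendsto 0).comp h1
        rwa [aux_zero hN0] at this
      have hN2 : Tendsto (fun k => N (x - xk k)) atTop (𝓝 0) := by
        have h1 : Tendsto (fun k => x - xk k) atTop (𝓝 0) := by
          have := (tendsto_const_nhds (x := x) (f := atTop)).sub hxk; simpa using this
        have := (hNcont.tendsto 0).comp h1
        rwa [aux_zero hN0] at this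
      have h1 : Tendsto (fun k => p x + N (xk k - x)) atTop (𝓝 (p x)) := by
        have := (tendsto_const_nhds (x := p x) (f := atTop)).add hN1
        simpa using this
      have h2 : Tendsto (fun k => p x - N (x - xk k)) atTop (𝓝 (p x)) := by
        have := (tendsto_const_nhds (x := p x) (f := atTop)).sub hN2
        simpa using this
      exact tendsto_of_tendsto_of_tendsto_of_le_of_le h2 h1 hlb hub
    -- nearest points
    have hex : ∀ k, ∃ y ∈ X, N (xk k - y) = p (xk k) := fun k => hnear (xk k)
    choose y hyX hyN using hex
    -- bounded
    have hbound : ∀ k, ‖y k‖ ≤ ‖xk k‖ + p (xk k) / c := by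
      intro k
      have h1 : c * ‖xk k - y k‖ ≤ p (xk k) := by
        rw [← hyN k]; exact hc _
      have h2 : ‖xk k - y k‖ ≤ p (xk k) / c := by
        rw [le_div_iff₀ hc0]; linarith
      have h3 : ‖y k‖ ≤ ‖xk k‖ + ‖xk k - y k‖ := by
        have := norm_sub_norm_le (xk k) (y k)  -- ‖xk‖ - ‖y‖ ≤ ‖xk - y‖ doesn't give it
        have h4 : y k = xk k - (xk k - y k) := by abel
        calc ‖y k‖ = ‖xk k - (xk k - y k)‖ := by rw [← h4]
        _ ≤ ‖xk k‖ + ‖xk k - y k‖ := norm_sub_le _ _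
      linarith
    obtain ⟨R, hR⟩ : ∃ R, ∀ k, ‖xk k‖ + p (xk k) / c ≤ R := by
      have hconv : Tendsto (fun k => ‖xk k‖ + p (xk k) / c) atTop (𝓝 (‖x‖ + p x / c)) :=
        (hxk.norm).add (hpxk.div_const c)
      obtain ⟨R, hR⟩ := hconv.bddAbove_range
      exact ⟨R, fun k => hR (Set.mem_range_self k)⟩
    have hymem : ∀ k, y k ∈ closedBall (0 : En n) R := by
      intro k
      rw [mem_closedBall, dist_zero_right]
      exact (hbound k).trans (hR k)
    obtain ⟨ystar, _, ψ, hψmono, hyψ⟩ :=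
      tendsto_subseq_of_bounded (isBounded_closedBall (x := (0 : En n)) (r := R)) hymem
    have hψat : Tendsto ψ atTop atTop := hψmono.tendsto_atTop
    -- limits along ψ
    have hxk2 : Tendsto (fun k => xk (ψ k)) atTop (𝓝 x) := hxk.comp hψat
    have hzk : Tendsto (fun k => xk (ψ k) - y (ψ k)) atTop (𝓝 (x - ystar)) :=
      hxk2.sub hyψ
    have hystarX : ystar ∈ X := hX.mem_of_tendsto hyψ (Eventually.of_forall fun k => hyX _)
    have hystarP : ystar ∈ P := by
      refine ⟨hystarX, ?_⟩
      have h1 : Tendsto (fun k => N (xk (ψ k) - y (ψ k))) atTop (𝓝 (N (x - ystar))) :=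
        (hNcont.tendsto _).comp hzk
      have h2 : Tendsto (fun k => N (xk (ψ k) - y (ψ k))) atTop (𝓝 (p x)) := by
        have : (fun k => N (xk (ψ k) - y (ψ k))) = fun k => p (xk (ψ k)) := by
          funext k; exact hyN (ψ k)
        rw [this]
        exact hpxk.comp hψat
      exact tendsto_nhds_unique h1 h2
    have hzstar : x - ystar ≠ 0 := hPz ystar hystarP
    have hgle : g w ≤ fderiv ℝ N (x - ystar) w := csInf_le hbdd ⟨ystar, hystarP, rfl⟩
    have haL : a < fderiv ℝ N (x - ystar) w := lt_of_lt_of_le ha hgle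
    -- choose s > 0
    obtain ⟨s, hsprop, hspos⟩ : ∃ s, a < (N (x - ystar) - N ((x - ystar) - s • w)) / s ∧ 0 < s := by
      have hds := aux_dirderiv hNdiff hzstar (-w)
      rw [hasDerivAt_iff_tendsto_slope] at hds
      have hds' : Tendsto (slope (fun s : ℝ => N ((x - ystar) + s • (-w))) 0) (𝓝[>] 0)
          (𝓝 (fderiv ℝ N (x - ystar) (-w))) :=
        hds.mono_left (nhdsWithin_mono _ (fun s hs => ne_of_gt hs))
      have hneg : Tendsto (fun s => -(slope (fun s : ℝ => N ((x - ystar) + s • (-w))) 0 s))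
          (𝓝[>] 0) (𝓝 (fderiv ℝ N (x - ystar) w)) := by
        have := hds'.neg
        rwa [map_neg, neg_neg] at this
      have hev : ∀ᶠ s in 𝓝[>] (0:ℝ),
          a < -(slope (fun s : ℝ => N ((x - ystar) + s • (-w))) 0 s) :=
        hneg.eventually_const_lt haL
      obtain ⟨s, hs1, hs2⟩ := (hev.and eventually_mem_nhdsWithin).exists
      refine ⟨s, ?_, hs2⟩
      have heq : -(slope (fun s : ℝ => N ((x - ystar) + s • (-w))) 0 s)
          = (N (x - ystar) - N ((x - ystar) - s • w)) / s := by
        rw [slope_def_field]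
        have h3 : (x - ystar) + s • (-w) = (x - ystar) - s • w := by
          rw [smul_neg]; abel
        have h4 : (x - ystar) + (0:ℝ) • (-w) = x - ystar := by simp
        rw [h3, h4]
        rw [sub_zero, ← neg_div, neg_sub]
      rwa [heq] at hs1
    -- eventual strict inequality
    have hws2 : Tendsto (fun k => ws' (ψ k)) atTop (𝓝 w) := hws'.comp hψat
    have hqev : ∀ᶠ k in atTop,
        a < (N (xk (ψ k) - y (ψ k)) - N ((xk (ψ k) - y (ψ k)) - s • ws' (ψ k))) / s := by
      have hlim : Tendsto
          (fun k => (N (xk (ψ k) - y (ψ k)) - N ((xk (ψ k) - y (ψ k)) - s • ws' (ψ k))) / s)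
          atTop (𝓝 ((N (x - ystar) - N ((x - ystar) - s • w)) / s)) := by
        have h1 : Tendsto (fun k => (xk (ψ k) - y (ψ k)) - s • ws' (ψ k)) atTop
            (𝓝 ((x - ystar) - s • w)) := hzk.sub ((hws2.const_smul s))
        exact (((hNcont.tendsto _).comp hzk).sub ((hNcont.tendsto _).comp h1)).div_const s
      exact hlim.eventually_const_lt hsprop
    have htpos2 : ∀ᶠ k in atTop, 0 < t' (ψ k) := hψat.eventually (hφat.eventually htpos)
    have htle : ∀ᶠ k in atTop, t' (ψ k) < s :=
      (ht0'.comp hψat).eventually_lt_const hspos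
    -- derive contradiction
    obtain ⟨k, hk1, hk3, hk4⟩ := (hqev.and (htpos2.and htle)).exists
    set zk := xk (ψ k) - y (ψ k) with hzkdef
    -- chain of inequalities
    have hq1 : p (xk (ψ k)) - p x ≥ N zk - N (zk - t' (ψ k) • ws' (ψ k)) := by
      have h1 : p (xk (ψ k)) = N zk := (hyN (ψ k)).symm
      have h2 : p x ≤ N (x - y (ψ k)) := hple x _ (hyX _)
      have h3 : x - y (ψ k) = zk - t' (ψ k) • ws' (ψ k) := by
        simp only [hzkdef, hxkdef]; abel
      rw [h3] at h2
      linarith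
    have hq2 : (N zk - N (zk - s • ws' (ψ k))) / s
        ≤ (N zk - N (zk - t' (ψ k) • ws' (ψ k))) / t' (ψ k) :=
      aux_slope_mono hNsmul hNadd zk (ws' (ψ k)) hk3 hk4.le
    have hfinal : a < (t' (ψ k))⁻¹ * (p (xk (ψ k)) - p x) := by
      have h1 : (N zk - N (zk - t' (ψ k) • ws' (ψ k))) / t' (ψ k)
          ≤ (t' (ψ k))⁻¹ * (p (xk (ψ k)) - p x) := by
        rw [div_eq_inv_mul]
        apply mul_le_mul_of_nonneg_left _ (inv_nonneg.2 hk3.le)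
        linarith
      calc a < (N zk - N (zk - s • ws' (ψ k))) / s := hk1
      _ ≤ (N zk - N (zk - t' (ψ k) • ws' (ψ k))) / t' (ψ k) := hq2
      _ ≤ (t' (ψ k))⁻¹ * (p (xk (ψ k)) - p x) := h1
    have hcontra := hφ (ψ k)
    rw [smul_eq_mul] at hcontra
    exact absurd hfinal (not_lt.2 hcontra)
  · -- upper bound
    intro b hb
    obtain ⟨r, hrmem, hrb⟩ := exists_lt_of_csInf_lt hgS hb
    obtain ⟨y', hy'P, rfl⟩ := hrmem
    have hz' := hPz y' hy'P
    have hA := aux_dir_limit hNdiff hz' ht hws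
    have hevA : ∀ᶠ k in atTop,
        (t k)⁻¹ * (N ((x - y') + t k • ws k) - N (x - y')) < b := hA.eventually_lt_const hrb
    filter_upwards [hevA, htpos] with k h1 h2
    have h3 : p (x + t k • ws k) ≤ N ((x - y') + t k • ws k) := by
      have h4 := hple (x + t k • ws k) y' hy'P.1
      have h5 : x + t k • ws k - y' = (x - y') + t k • ws k := by abel
      rw [h5] at h4
      exact h4
    have h6 : p x = N (x - y') := hy'P.2.symm
    have h7 : (t k)⁻¹ • (p (x + t k • ws k) - p x)
        ≤ (t k)⁻¹ * (N ((x - y') + t k • ws k) - N (x - y')) := by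
      rw [smul_eq_mul]
      apply mul_le_mul_of_nonneg_left _ (inv_nonneg.2 h2.le)
      linarith
    exact lt_of_le_of_lt h7 h1
end

section
/- Let ‖·‖_* be a norm on ℝⁿ that is Fréchet differentiable on ℝⁿ∖{0}, X ⊆ ℝⁿ nonempty closed, and p(x) := dist_*(x; X). Then for every x ∈ X and every w ∈ ℝⁿ, the subderivative of p satisfies d p(x)(w) = dist_*(w; T_X(x)), the ‖·‖_*-distance from w to the tangent cone of X at x. -/
open Filter Topology Metric Set

section Aux

variable {n : ℕ} {N : En n → ℝ}
  (hN0 : ∀ z, N z = 0 ↔ z = 0)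
  (hNsmul : ∀ (a : ℝ) z, N (a • z) = |a| * N z)
  (hNadd : ∀ z₁ z₂, N (z₁ + z₂) ≤ N z₁ + N z₂)

section Basic
include hNsmul

lemma N_zero : N 0 = 0 := by
  have := hNsmul 0 0
  simpa using this

include hNadd

lemma N_nonneg (z : En n) : 0 ≤ N z := by
  have h1 : N (z + (-z)) ≤ N z + N (-z) := hNadd z (-z)
  have h2 : N (-z) = N z := by
    have := hNsmul (-1) z
    simpa using this
  have h0 : N (z + (-z)) = 0 := by
    rw [add_neg_cancel, N_zero hNsmul]
  nlinarith

lemma N_sub_le (a b : En n) : N a - N b ≤ N (a - b) := by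
  have := hNadd (a - b) b
  simp only [sub_add_cancel] at this
  linarith

/-- Upper bound: `N z ≤ C * ‖z‖`. -/
lemma N_upper : ∃ C : ℝ, 0 < C ∧ ∀ z, N z ≤ C * ‖z‖ := by
  classical
  set C : ℝ := (∑ i : Fin n, N (EuclideanSpace.single i (1:ℝ))) + 1 with hC
  have hCpos : 0 < C := by
    have : 0 ≤ ∑ i : Fin n, N (EuclideanSpace.single i (1:ℝ)) :=
      Finset.sum_nonneg fun i _ => N_nonneg hNsmul hNadd _
    positivity
  refine ⟨C, hCpos, fun z => ?_⟩
  have hcoord : ∀ i : Fin n, |z i| ≤ ‖z‖ := by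
    intro i
    have h1 : ‖z‖ = Real.sqrt (∑ j : Fin n, ‖z j‖ ^ 2) := EuclideanSpace.norm_eq z
    have h2 : |z i| = Real.sqrt (‖z i‖ ^ 2) := by
      rw [Real.sqrt_sq_eq_abs, Real.norm_eq_abs, abs_abs]
    rw [h1, h2]
    exact Real.sqrt_le_sqrt (Finset.single_le_sum (f := fun j => ‖z j‖ ^ 2)
      (fun j _ => sq_nonneg _) (Finset.mem_univ i))
  have hz : ∑ i : Fin n, z i • EuclideanSpace.single i (1:ℝ) = z := by
    have := (EuclideanSpace.basisFun (Fin n) ℝ).sum_repr z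
    simpa [EuclideanSpace.basisFun_apply, EuclideanSpace.basisFun_repr] using this
  calc N z = N (∑ i : Fin n, z i • EuclideanSpace.single i (1:ℝ)) := by rw [hz]
    _ ≤ ∑ i : Fin n, N (z i • EuclideanSpace.single i (1:ℝ)) :=
        Finset.le_sum_of_subadditive N (N_zero hNsmul).le hNadd _ _
    _ = ∑ i : Fin n, |z i| * N (EuclideanSpace.single i (1:ℝ)) := by
        refine Finset.sum_congr rfl fun i _ => hNsmul _ _
    _ ≤ ∑ i : Fin n, ‖z‖ * N (EuclideanSpace.single i (1:ℝ)) := by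
        refine Finset.sum_le_sum fun i _ => ?_
        exact mul_le_mul_of_nonneg_right (hcoord i) (N_nonneg hNsmul hNadd _)
    _ = (∑ i : Fin n, N (EuclideanSpace.single i (1:ℝ))) * ‖z‖ := by
        rw [← Finset.mul_sum, mul_comm]
    _ ≤ C * ‖z‖ := by
        have : 0 ≤ ‖z‖ := norm_nonneg z
        nlinarith

lemma N_continuous : Continuous N := by
  obtain ⟨C, hCpos, hC⟩ := N_upper hNsmul hNadd
  have : LipschitzWith (Real.toNNReal C) N := by
    refine LipschitzWith.of_dist_le_mul fun a b => ?_
    have h1 : N a - N b ≤ N (a - b) := N_sub_le hNsmul hNadd a b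
    have h2 : N b - N a ≤ N (b - a) := N_sub_le hNsmul hNadd b a
    have h3 : N (a - b) ≤ C * ‖a - b‖ := hC _
    have h4 : N (b - a) ≤ C * ‖b - a‖ := hC _
    have h5 : ‖b - a‖ = ‖a - b‖ := norm_sub_rev b a
    rw [Real.dist_eq, dist_eq_norm, Real.coe_toNNReal _ hCpos.le]
    rw [abs_sub_le_iff]
    constructor <;> nlinarith
  exact this.continuous

include hN0

/-- Lower bound: `c * ‖z‖ ≤ N z`. -/
lemma N_lower : ∃ c : ℝ, 0 < c ∧ ∀ z, c * ‖z‖ ≤ N z := by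
  by_cases hsp : (sphere (0 : En n) 1).Nonempty
  · obtain ⟨z0, hz0, hmin⟩ := (isCompact_sphere (0 : En n) 1).exists_isMinOn hsp
      (N_continuous hNsmul hNadd).continuousOn
    have hz0norm : ‖z0‖ = 1 := by simpa using hz0
    have hz0ne : z0 ≠ 0 := by intro h; rw [h] at hz0norm; simp at hz0norm
    have hcpos : 0 < N z0 := by
      rcases lt_or_eq_of_le (N_nonneg hNsmul hNadd z0) with h | h
      · exact h
      · exact absurd ((hN0 z0).mp h.symm) hz0ne
    refine ⟨N z0, hcpos, fun z => ?_⟩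
    by_cases hz : z = 0
    · simp [hz, N_zero hNsmul]
    · have hnz : ‖z‖ ≠ 0 := norm_ne_zero_iff.mpr hz
      have hunit : ‖z‖⁻¹ • z ∈ sphere (0 : En n) 1 := by
        simp [norm_smul, abs_of_pos (inv_pos.mpr (norm_pos_iff.mpr hz)),
          inv_mul_cancel₀ hnz]
      have h1 : N z0 ≤ N (‖z‖⁻¹ • z) := hmin hunit
      have h2 : N (‖z‖⁻¹ • z) = ‖z‖⁻¹ * N z := by
        rw [hNsmul]
        congr 1
        exact abs_of_pos (inv_pos.mpr (norm_pos_iff.mpr hz))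
      rw [h2] at h1
      have hpos : (0:ℝ) < ‖z‖ := norm_pos_iff.mpr hz
      calc N z0 * ‖z‖ ≤ (‖z‖⁻¹ * N z) * ‖z‖ := by nlinarith
        _ = N z := by field_simp
  · refine ⟨1, one_pos, fun z => ?_⟩
    have hz : z = 0 := by
      by_contra hz
      exact hsp ⟨‖z‖⁻¹ • z, by
        simp [norm_smul, abs_of_pos (inv_pos.mpr (norm_pos_iff.mpr hz)),
          inv_mul_cancel₀ (norm_ne_zero_iff.mpr hz)]⟩
    simp [hz, N_zero hNsmul]

end Basic

section Dist

variable {X : Set (En n)}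

include hNsmul hNadd in
lemma distN_bddBelow (z : En n) : BddBelow ((fun y => N (z - y)) '' X) :=
  ⟨0, fun _ ⟨y, _, hy⟩ => hy ▸ N_nonneg hNsmul hNadd _⟩

include hNsmul hNadd in
lemma distN_le_mem (z : En n) {y : En n} (hy : y ∈ X) : distN N z X ≤ N (z - y) :=
  csInf_le (distN_bddBelow hNsmul hNadd z) ⟨y, hy, rfl⟩

include hNsmul hNadd in
lemma distN_nonneg (hne : X.Nonempty) (z : En n) : 0 ≤ distN N z X :=
  le_csInf (hne.image _) fun _ ⟨y, _, hy⟩ => hy ▸ N_nonneg hNsmul hNadd _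

include hNsmul hNadd in
lemma distN_self {z : En n} (hz : z ∈ X) : distN N z X = 0 := by
  refine le_antisymm ?_ (distN_nonneg hNsmul hNadd ⟨z, hz⟩ z)
  have := distN_le_mem hNsmul hNadd z hz
  simpa [N_zero hNsmul] using this

include hN0 hNsmul hNadd in
/-- The infimum defining `distN` is attained on a nonempty closed set. -/
lemma distN_exists_min (hX : IsClosed X) (hne : X.Nonempty) (z : En n) :
    ∃ y ∈ X, distN N z X = N (z - y) := by
  obtain ⟨y0, hy0⟩ := hne
  obtain ⟨c, hcpos, hc⟩ := N_lower hN0 hNsmul hNadd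
  set r : ℝ := N (z - y0) with hr
  set K : Set (En n) := X ∩ (fun y => N (z - y)) ⁻¹' Iic r with hK
  have hcont : Continuous fun y : En n => N (z - y) :=
    (N_continuous hNsmul hNadd).comp (continuous_const.sub continuous_id)
  have hKclosed : IsClosed K := hX.inter (isClosed_Iic.preimage hcont)
  have hKsub : K ⊆ closedBall z (r / c) := by
    rintro y ⟨_, hy2⟩
    simp only [mem_preimage, mem_Iic] at hy2
    have h1 : c * ‖z - y‖ ≤ r := le_trans (hc _) hy2
    have : ‖z - y‖ ≤ r / c := by
      rw [le_div_iff₀ hcpos]; linarith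
    simpa [mem_closedBall, dist_eq_norm, norm_sub_rev y z] using this
  have hKcompact : IsCompact K :=
    (isCompact_closedBall z (r / c)).of_isClosed_subset hKclosed hKsub
  have hKne : K.Nonempty := ⟨y0, hy0, by simp [mem_preimage, hr]⟩
  obtain ⟨y, hyK, hmin⟩ := hKcompact.exists_isMinOn hKne hcont.continuousOn
  refine ⟨y, hyK.1, ?_⟩
  refine IsLeast.csInf_eq ⟨⟨y, hyK.1, rfl⟩, ?_⟩
  rintro _ ⟨y', hy', rfl⟩
  by_cases h : N (z - y') ≤ r
  · exact hmin ⟨hy', by simpa [mem_preimage] using h⟩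
  · have h1 : N (z - y) ≤ r := hmin ⟨hy0, by simp [mem_preimage, hr]⟩
    linarith

end Dist

end Aux

/-- For a Fréchet smooth norm `N = ‖·‖_*`, a nonempty closed set `X` and `x ∈ X`, the
subderivative of `p = dist_*(·;X)` at `x` is `d p(x)(w) = dist_*(w; T_X(x))`. -/
theorem stmt9 {n : ℕ} (N : En n → ℝ)
    (hN0 : ∀ z, N z = 0 ↔ z = 0)
    (hNsmul : ∀ (a : ℝ) z, N (a • z) = |a| * N z)
    (hNadd : ∀ z₁ z₂, N (z₁ + z₂) ≤ N z₁ + N z₂)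
    (hNdiff : ∀ z, z ≠ 0 → DifferentiableAt ℝ N z)
    (X : Set (En n)) (hX : IsClosed X) (hne : X.Nonempty)
    (x : En n) (hx : x ∈ X) :
    ∀ w, subderiv (fun z => distN N z X) x w = ((distN N w (tanCone X x) : ℝ) : EReal) := by
  intro w
  set p : En n → ℝ := fun z => distN N z X with hp
  set T : Set (En n) := tanCone X x with hT
  set F : Filter (ℝ × En n) := (𝓝[>] (0:ℝ)) ×ˢ 𝓝 w with hF
  have hpx : p x = 0 := distN_self hNsmul hNadd hx
  have hpnonneg : ∀ z, 0 ≤ p z := distN_nonneg hNsmul hNadd hne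
  -- `0 ∈ T`, so `T` is nonempty
  have hT0 : (0 : En n) ∈ T := by
    refine ⟨fun k => (k+1:ℝ)⁻¹, fun _ => 0, fun k => by positivity, ?_, tendsto_const_nhds,
      fun k => by simpa using hx⟩
    exact tendsto_one_div_add_atTop_nhds_zero_nat.congr (fun k => by simp [one_div])
  have hTne : T.Nonempty := ⟨0, hT0⟩
  set d : ℝ := distN N w T with hd
  -- key upper bound for `p` at points of the form `x + t • w'`
  have hkey : ∀ (t : ℝ), 0 < t → ∀ (w' v : En n), x + t • v ∈ X →
      p (x + t • w') ≤ t * N (w' - v) := by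
    intro t ht w' v hv
    have h1 : p (x + t • w') ≤ N (x + t • w' - (x + t • v)) :=
      distN_le_mem hNsmul hNadd _ hv
    have h2 : x + t • w' - (x + t • v) = t • (w' - v) := by
      rw [smul_sub]; abel
    rw [h2, hNsmul, abs_of_pos ht] at h1
    exact h1
  have hsub : subderiv p x w = Filter.liminf (fun q : ℝ × En n =>
      (((p (x + q.1 • q.2) - p x) / q.1 : ℝ) : EReal)) F := rfl
  rw [hsub]
  set f : ℝ × En n → EReal := fun q => (((p (x + q.1 • q.2) - p x) / q.1 : ℝ) : EReal) with hf
  have hfval : ∀ q : ℝ × En n, f q = ((p (x + q.1 • q.2) / q.1 : ℝ) : EReal) := by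
    intro q; simp [hf, hpx]
  refine le_antisymm ?_ ?_
  · -- liminf ≤ d : via frequent upper bounds d + ε
    have hstep : ∀ ε : ℝ, 0 < ε → liminf f F ≤ ((d + ε : ℝ) : EReal) := by
      intro ε hε
      obtain ⟨_, ⟨v, hvT, rfl⟩, hvlt⟩ :=
        exists_lt_of_csInf_lt (hTne.image _) (show d < d + ε by linarith)
      obtain ⟨t, vs, ht0, htlim, hvslim, hmem⟩ := hvT
      have htend : Tendsto (fun k => ((t k, w) : ℝ × En n)) atTop F := by
        refine Tendsto.prodMk ?_ tendsto_const_nhds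
        exact tendsto_nhdsWithin_of_tendsto_nhds_of_eventually_within _ htlim
          (Eventually.of_forall fun k => ht0 k)
      have hNlim : Tendsto (fun k => N (w - vs k)) atTop (𝓝 (N (w - v))) := by
        exact ((N_continuous hNsmul hNadd).comp
          (continuous_const.sub continuous_id)).continuousAt.tendsto.comp hvslim
      have hev : ∀ᶠ k in atTop, f (t k, w) ≤ ((d + ε : ℝ) : EReal) := by
        filter_upwards [hNlim.eventually_lt_const hvlt] with k hk
        rw [hfval]
        rw [EReal.coe_le_coe_iff]
        have h1 : p (x + t k • w) ≤ t k * N (w - vs k) := hkey (t k) (ht0 k) w (vs k) (hmem k)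
        rw [div_le_iff₀ (ht0 k)]
        calc p (x + t k • w) ≤ t k * N (w - vs k) := h1
          _ ≤ (d + ε) * t k := by nlinarith [ht0 k]
      exact liminf_le_of_frequently_le' (htend.frequently hev.frequently)
    -- pass to the limit ε → 0⁺
    have htendeps : Tendsto (fun ε : ℝ => ((d + ε : ℝ) : EReal)) (𝓝[>] 0) (𝓝 ((d : ℝ) : EReal)) := by
      have h1 : Tendsto (fun ε : ℝ => d + ε) (𝓝[>] 0) (𝓝 d) := by
        have h0 := (continuous_add_left d).tendsto (0:ℝ)
        simp only [add_zero] at h0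
        exact h0.mono_left nhdsWithin_le_nhds
      exact (continuous_coe_real_ereal.tendsto d).comp h1
    refine ge_of_tendsto htendeps ?_
    filter_upwards [self_mem_nhdsWithin] with ε hε
    exact hstep ε hε
  · -- d ≤ liminf
    rw [le_liminf_iff]
    intro b hb
    obtain ⟨c, hbc, hcd⟩ := EReal.exists_between_coe_real hb
    have hclaim : ∀ᶠ q in F, (c : EReal) ≤ f q := by
      by_contra hcon
      rw [not_eventually] at hcon
      have hcon' : ∃ᶠ q in F, ¬((c:EReal) ≤ f q) ∧ 0 < q.1 := by
        refine hcon.and_eventually ?_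
        have : Ioi (0:ℝ) ×ˢ (univ : Set (En n)) ∈ F :=
          prod_mem_prod self_mem_nhdsWithin univ_mem
        filter_upwards [this] with q hq
        exact hq.1
      obtain ⟨q, hqtend, hqprop⟩ := exists_seq_forall_of_frequently hcon'
      set t : ℕ → ℝ := fun k => (q k).1 with ht
      set u : ℕ → En n := fun k => (q k).2 with hu
      have htpos : ∀ k, 0 < t k := fun k => (hqprop k).2
      rw [tendsto_prod_iff'] at hqtend
      have htlim : Tendsto t atTop (𝓝 0) := hqtend.1.mono_right nhdsWithin_le_nhds
      have hulim : Tendsto u atTop (𝓝 w) := hqtend.2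
      have hflt : ∀ k, p (x + t k • u k) / t k < c := by
        intro k
        have := (hqprop k).1
        rw [hfval] at this
        rw [not_le] at this
        exact_mod_cast this
      -- nearest points
      have hnear : ∀ k, ∃ y ∈ X, p (x + t k • u k) = N (x + t k • u k - y) :=
        fun k => distN_exists_min hN0 hNsmul hNadd hX hne _
      choose y hyX hyN using hnear
      set v : ℕ → En n := fun k => (t k)⁻¹ • (y k - x) with hv
      have hNv : ∀ k, N (u k - v k) < c := by
        intro k
        have h1 : p (x + t k • u k) < c * t k := by
          have := hflt k
          rw [div_lt_iff₀ (htpos k)] at this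
          linarith [this]
        have h2 : u k - v k = (t k)⁻¹ • (x + t k • u k - y k) := by
          rw [hv, smul_sub]
          simp only [smul_add, smul_sub]
          rw [inv_smul_smul₀ (htpos k).ne']
          abel
        have h3 : N (u k - v k) = (t k)⁻¹ * N (x + t k • u k - y k) := by
          rw [h2, hNsmul, abs_of_pos (inv_pos.mpr (htpos k))]
        rw [h3, ← hyN k, inv_mul_lt_iff₀ (htpos k)]
        linarith [h1]
      -- boundedness of `v`
      obtain ⟨c0, hc0pos, hc0⟩ := N_lower hN0 hNsmul hNadd
      obtain ⟨R0, hR0⟩ := ((continuous_norm.tendsto w).comp hulim).bddAbove_range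
      have hubd : ∀ k, ‖u k‖ ≤ R0 := fun k => hR0 ⟨k, rfl⟩
      set R : ℝ := R0 + c / c0 + 1 with hR
      have hvbd : ∀ k, v k ∈ closedBall (0 : En n) R := by
        intro k
        have h1 : c0 * ‖u k - v k‖ ≤ N (u k - v k) := hc0 _
        have h2 : ‖u k - v k‖ ≤ c / c0 := by
          rw [le_div_iff₀ hc0pos]
          nlinarith [hNv k]
        have h3 : ‖v k‖ ≤ ‖u k‖ + ‖u k - v k‖ := by
          have := norm_sub_le (u k) (v k)
          have h4 : ‖v k‖ - ‖u k‖ ≤ ‖v k - u k‖ := norm_sub_norm_le _ _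
          rw [norm_sub_rev] at h4
          linarith
        simp only [mem_closedBall, dist_zero_right]
        have := hubd k
        rw [hR]; linarith
      obtain ⟨vL, _, φ, hφ, hvlim⟩ := (isCompact_closedBall (0:En n) R).tendsto_subseq hvbd
      -- vL ∈ T
      have hvT : vL ∈ T := by
        refine ⟨t ∘ φ, v ∘ φ, fun k => htpos _, htlim.comp hφ.tendsto_atTop, hvlim, fun k => ?_⟩
        have : x + t (φ k) • v (φ k) = y (φ k) := by
          simp only [Function.comp, hv]
          rw [smul_inv_smul₀ (htpos (φ k)).ne']
          abel
        simp only [Function.comp]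
        rw [this]
        exact hyX _
      -- conclude contradiction
      have hdle : d ≤ N (w - vL) := distN_le_mem hNsmul hNadd _ hvT
      have hNlim : Tendsto (fun k => N (u (φ k) - v (φ k))) atTop (𝓝 (N (w - vL))) := by
        have h1 : Tendsto (fun k => u (φ k) - v (φ k)) atTop (𝓝 (w - vL)) :=
          ((hulim.comp hφ.tendsto_atTop).sub hvlim)
        exact ((N_continuous hNsmul hNadd).tendsto _).comp h1
      have hle : N (w - vL) ≤ c :=
        le_of_tendsto hNlim (Eventually.of_forall fun k => (hNv _).le)
      have : (c : EReal) < (d : EReal) := hcd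
      rw [EReal.coe_lt_coe_iff] at this
      linarith
    filter_upwards [hclaim] with q hq
    exact lt_of_lt_of_le hbc hq
end
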